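/- arXiv:math/0510585 — 7 statements merged into one kernel-verified Lean document; each statement's English description precedes it below -/
import Mathlib

section
/- For every natural number n ≥ 1, the harmonic number H_n = 1 + 1/2 + ... + 1/n satisfies 1/(2n + 1/(1-γ) - 2) ≤ H_n - ln n - γ < 1/(2n + 1/3), where γ is the Euler–Mascheroni constant, with equality on the left only for n = 1. -/
open Real Filter Topology

noncomputable def H (n : ℕ) : ℝ := ∑ i ∈ Finset.range n, (1 : ℝ) / (i + 1)

lemma log_lower_aux (c : ℝ) (hc : 0 < c) :
    2*(1/(2*c+1)) + (2/3)*(1/(2*c+1))^3 + (2/5)*(1/(2*c+1))^5 ≤ log (1 + c⁻¹) := by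
  have h := Real.hasSum_log_one_add_inv hc
  have h2 := sum_le_hasSum (Finset.range 3) (fun i _ => by positivity) h
  refine le_trans (le_of_eq ?_) h2
  simp [Finset.sum_range_succ]
  norm_num

lemma log_upper_aux (c : ℝ) (hc : 0 < c) :
    log (1 + c⁻¹) ≤ 2*(1/(2*c+1)) + (2/3)*(1/(2*c+1))^3 / (1 - (1/(2*c+1))^2) := by
  set x : ℝ := 1/(2*c+1) with hxdef
  have hx0 : 0 < x := by positivity
  have hx1 : x < 1 := by
    rw [hxdef, div_lt_one (by linarith)]; linarith
  have h := Real.hasSum_log_one_add_inv hc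
  have h1 : HasSum (fun k : ℕ => (2:ℝ) * (1/(2*(k+1)+1)) * x^(2*(k+1)+1))
      (log (1 + c⁻¹) - 2*x) := by
    have := (hasSum_nat_add_iff' (f := fun k : ℕ => (2:ℝ) * (1/(2*(k:ℝ)+1)) * x^(2*k+1)) 1).mpr h
    simpa [Finset.sum_range_succ] using this
  have hg : HasSum (fun k : ℕ => (2/3)*x^3 * (x^2)^k) ((2/3)*x^3 * (1 - x^2)⁻¹) :=
    (hasSum_geometric_of_lt_one (by positivity) (by nlinarith)).mul_left _
  have hle : log (1 + c⁻¹) - 2*x ≤ (2/3)*x^3 * (1 - x^2)⁻¹ := by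
    refine hasSum_le (fun k => ?_) h1 hg
    have hxe : (2/3:ℝ)*x^3 * (x^2)^k = (2 * (1/3)) * x^(2*(k+1)+1) := by
      rw [← pow_mul, show 2*(k+1)+1 = 3 + 2*k from by ring, pow_add]
      ring
    rw [hxe]
    apply mul_le_mul_of_nonneg_right _ (by positivity)
    have h3 : (0:ℝ) < 2*((k:ℝ)+1)+1 := by positivity
    rw [mul_le_mul_iff_right₀ (by norm_num : (0:ℝ) < 2), div_le_div_iff₀ h3 (by norm_num)]
    linarith
  have h2 : (2/3)*x^3 * (1 - x^2)⁻¹ = (2/3)*x^3 / (1 - x^2) := by ring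
  linarith

lemma step_upper (c : ℝ) (hc : 1 ≤ c) :
    log (1 + c⁻¹) - 1/(c+1) < 1/(2*c+1/3) - 1/(2*(c+1)+1/3) := by
  have hc0 : (0:ℝ) < c := by linarith
  have h1 := log_upper_aux c hc0
  have h2 : 2*(1/(2*c+1)) + (2/3)*(1/(2*c+1))^3 / (1 - (1/(2*c+1))^2)
      = 2/(2*c+1) + 1/(6*c*(c+1)*(2*c+1)) := by
    have e1 : 1 - (1/(2*c+1))^2 = (4*c*(c+1))/((2*c+1)^2) := by
      field_simp; ring
    rw [e1]
    field_simp
    ring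
  have h3 : 2/(2*c+1) + 1/(6*c*(c+1)*(2*c+1)) - 1/(c+1) = (6*c+1)/(6*c*(c+1)*(2*c+1)) := by
    field_simp
    ring
  have h4 : 1/(2*c+1/3) - 1/(2*(c+1)+1/3) = 18/((6*c+1)*(6*c+7)) := by
    field_simp
    ring
  have h5 : (6*c+1)/(6*c*(c+1)*(2*c+1)) < 18/((6*c+1)*(6*c+7)) := by
    rw [div_lt_div_iff₀ (by positivity) (by positivity)]
    nlinarith
  rw [h4]
  calc log (1 + c⁻¹) - 1/(c+1) ≤ (6*c+1)/(6*c*(c+1)*(2*c+1)) := by linarith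
    _ < 18/((6*c+1)*(6*c+7)) := h5

lemma step_lower (c : ℝ) (hc : 2 ≤ c) :
    1/(2*c+91/250) - 1/(2*(c+1)+91/250) < log (1 + c⁻¹) - 1/(c+1) := by
  have hc0 : (0:ℝ) < c := by linarith
  have h1 := log_lower_aux c hc0
  have h2 : 1/(2*c+91/250) - 1/(2*(c+1)+91/250)
      < 2*(1/(2*c+1)) + (2/3)*(1/(2*c+1))^3 + (2/5)*(1/(2*c+1))^5 - 1/(c+1) := by
    have e1 : 1/(2*c+91/250) - 1/(2*(c+1)+91/250) = 2/((2*c+91/250)*(2*c+2+91/250)) := by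
      field_simp
      ring
    have e2 : 2*(1/(2*c+1)) + (2/3)*(1/(2*c+1))^3 + (2/5)*(1/(2*c+1))^5 - 1/(c+1)
        = (30*(2*c+1)^4*(c+1) + 10*(2*c+1)^2*(c+1) + 6*(c+1) - 15*(2*c+1)^5)
          / (15*(2*c+1)^5*(c+1)) := by
      field_simp
      ring
    rw [e1, e2, div_lt_div_iff₀ (by positivity) (by positivity)]
    nlinarith [sq_nonneg (c-2), sq_nonneg c, pow_pos hc0 3, pow_pos hc0 4, pow_pos hc0 5,
      mul_nonneg (sub_nonneg.2 hc) (sq_nonneg (c-2)),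
      mul_nonneg (mul_nonneg (sub_nonneg.2 hc) (sub_nonneg.2 hc)) (sq_nonneg (c-2))]
  linarith

noncomputable def D (n : ℕ) : ℝ := H n - Real.log n - Real.eulerMascheroniConstant

lemma H_eq (n : ℕ) : H n = (harmonic n : ℝ) := by
  rw [H, harmonic]
  push_cast
  simp [one_div]

lemma tendsto_D : Tendsto D atTop (𝓝 0) := by
  have h := Real.tendsto_harmonic_sub_log.sub
    (tendsto_const_nhds (x := Real.eulerMascheroniConstant) (f := atTop (α := ℕ)))
  rw [sub_self] at h
  refine h.congr fun n => ?_
  rw [D, H_eq]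

lemma tendsto_inv_lin (q : ℝ) : Tendsto (fun n : ℕ => 1/(2*(n:ℝ)+q)) atTop (𝓝 0) := by
  have h : Tendsto (fun n : ℕ => 2*(n:ℝ)+q) atTop atTop :=
    tendsto_atTop_add_const_right _ q
      (tendsto_natCast_atTop_atTop.const_mul_atTop (by norm_num))
  simpa [one_div, Pi.inv_def] using h.inv_tendsto_atTop

lemma D_succ (n : ℕ) (hn : 1 ≤ n) :
    D (n+1) = D n - (log (1 + (n:ℝ)⁻¹) - 1/((n:ℝ)+1)) := by
  have hn0 : (0:ℝ) < n := by exact_mod_cast hn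
  have hlog : Real.log ((n:ℝ)+1) = Real.log n + Real.log (1 + (n:ℝ)⁻¹) := by
    rw [← Real.log_mul (ne_of_gt hn0) (by positivity)]
    congr 1
    field_simp
  simp only [D, H, Finset.sum_range_succ]
  push_cast
  rw [hlog]
  ring

lemma neg_of_tendsto (u : ℕ → ℝ) (h0 : Tendsto u atTop (𝓝 0)) (N : ℕ)
    (hstep : ∀ m, N ≤ m → u m < u (m+1)) : ∀ n, N ≤ n → u n < 0 := by
  have hmono : ∀ a, N ≤ a → ∀ m, a ≤ m → u a ≤ u m := by
    intro a ha m hm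
    induction m, hm using Nat.le_induction with
    | base => exact le_rfl
    | succ m hm ih => exact ih.trans (hstep m (ha.trans hm)).le
  intro n hn
  have h1 : u (n+1) ≤ 0 := by
    refine ge_of_tendsto h0 ?_
    filter_upwards [eventually_ge_atTop (n+1)] with m hm
    exact hmono (n+1) (by omega) m hm
  exact (hstep n hn).trans_le h1

lemma D_upper (n : ℕ) (hn : 1 ≤ n) : D n < 1/(2*(n:ℝ)+1/3) := by
  have h0 : Tendsto (fun m : ℕ => D m - 1/(2*(m:ℝ)+1/3)) atTop (𝓝 0) := by
    simpa using tendsto_D.sub (tendsto_inv_lin (1/3))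
  have hstep : ∀ m : ℕ, 1 ≤ m →
      D m - 1/(2*(m:ℝ)+1/3) < D (m+1) - 1/(2*((m+1:ℕ):ℝ)+1/3) := by
    intro m hm
    have hm1 : (1:ℝ) ≤ m := by exact_mod_cast hm
    have hs := step_upper m hm1
    rw [D_succ m hm]
    push_cast
    linarith
  have := neg_of_tendsto _ h0 1 hstep n hn
  linarith

lemma D_lower (n : ℕ) (hn : 2 ≤ n) : 1/(2*(n:ℝ)+91/250) < D n := by
  have h0 : Tendsto (fun m : ℕ => 1/(2*(m:ℝ)+91/250) - D m) atTop (𝓝 0) := by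
    simpa using (tendsto_inv_lin (91/250)).sub tendsto_D
  have hstep : ∀ m : ℕ, 2 ≤ m →
      1/(2*(m:ℝ)+91/250) - D m < 1/(2*((m+1:ℕ):ℝ)+91/250) - D (m+1) := by
    intro m hm
    have hm1 : (2:ℝ) ≤ m := by exact_mod_cast hm
    have hs := step_lower m hm1
    rw [D_succ m (by omega)]
    push_cast
    linarith
  have := neg_of_tendsto _ h0 2 hstep n hn
  linarith

lemma gamma_gt : (341/591:ℝ) < Real.eulerMascheroniConstant := by
  have h := D_upper 6 (by norm_num)
  have hH6 : H 6 = 49/20 := by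
    norm_num [H, Finset.sum_range_succ]
  have hlog : Real.log 6 < 783683/437340 := by
    rw [Real.log_lt_iff_lt_exp (by norm_num)]
    refine lt_of_lt_of_le ?_ (Real.sum_le_exp_of_nonneg (by norm_num) 9)
    simp_rw [Finset.sum_range_succ]
    norm_num [Nat.factorial]
  rw [D, hH6] at h
  norm_num at h ⊢
  linarith

theorem stmt0 (n : ℕ) (hn : 1 ≤ n) :
    1 / (2 * n + 1 / (1 - Real.eulerMascheroniConstant) - 2) ≤ H n - Real.log n - Real.eulerMascheroniConstant ∧
    H n - Real.log n - Real.eulerMascheroniConstant < 1 / (2 * n + 1 / 3) ∧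
    (1 / (2 * n + 1 / (1 - Real.eulerMascheroniConstant) - 2) = H n - Real.log n - Real.eulerMascheroniConstant ↔ n = 1) := by
  have hγu : Real.eulerMascheroniConstant < 2/3 := Real.eulerMascheroniConstant_lt_two_thirds
  have hγl : (341/591:ℝ) < Real.eulerMascheroniConstant := gamma_gt
  have h1γ : (0:ℝ) < 1 - Real.eulerMascheroniConstant := by linarith
  have hDn : H n - Real.log n - Real.eulerMascheroniConstant = D n := by rw [D]
  have hup : H n - Real.log n - Real.eulerMascheroniConstant < 1 / (2 * n + 1 / 3) := by
    rw [hDn]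
    exact D_upper n hn
  have hinv : (591/250:ℝ) < 1/(1-Real.eulerMascheroniConstant) := by
    have h1 : (1:ℝ) - Real.eulerMascheroniConstant < 250/591 := by linarith
    have := one_div_lt_one_div_of_lt h1γ h1
    norm_num at this ⊢
    linarith
  rcases eq_or_lt_of_le hn with h1 | h2
  · -- n = 1
    have hn1 : n = 1 := h1.symm
    subst hn1
    have hH1 : H 1 = 1 := by norm_num [H]
    have heq : 1 / (2 * ((1:ℕ):ℝ) + 1 / (1 - Real.eulerMascheroniConstant) - 2)
        = H 1 - Real.log (1:ℕ) - Real.eulerMascheroniConstant := by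
      rw [hH1]
      push_cast
      rw [Real.log_one]
      rw [show (2:ℝ) * 1 + 1 / (1 - Real.eulerMascheroniConstant) - 2
          = 1 / (1 - Real.eulerMascheroniConstant) from by ring, one_div_one_div]
      ring
    exact ⟨le_of_eq heq, hup, ⟨fun _ => rfl, fun _ => heq⟩⟩
  · -- 2 ≤ n
    have hn2 : 2 ≤ n := h2
    have hlow := D_lower n hn2
    have hn0 : (1:ℝ) ≤ (n:ℝ) := by exact_mod_cast hn
    have hdenpos : (0:ℝ) < 2 * n + 91/250 := by linarith
    have hdlt : 2 * (n:ℝ) + 91/250 < 2 * n + 1/(1-Real.eulerMascheroniConstant) - 2 := by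
      linarith
    have hstrict : 1 / (2 * (n:ℝ) + 1/(1-Real.eulerMascheroniConstant) - 2)
        < H n - Real.log n - Real.eulerMascheroniConstant := by
      rw [hDn]
      exact lt_trans (one_div_lt_one_div_of_lt hdenpos hdlt) hlow
    refine ⟨le_of_lt hstrict, hup, ?_⟩
    constructor
    · intro heq
      exact absurd heq (ne_of_lt hstrict)
    · intro hn1
      omega
end

section
/- The sequence λ_n defined by H_n = ln √(n(n+1)) + γ + 1/(6n(n+1) + λ_n) is strictly monotonically increasing in n ≥ 1. -/
open Real Filter

open Topology

noncomputable def lam (n : ℕ) : ℝ :=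
  1 / (H n - (1 / 2) * Real.log (n * (n + 1)) - Real.eulerMascheroniConstant) - 6 * n * (n + 1)

noncomputable def dd (n : ℕ) : ℝ :=
  H n - (1 / 2) * Real.log (n * (n + 1)) - Real.eulerMascheroniConstant

noncomputable def gR (x : ℝ) : ℝ := 50*x*(x+1) / (300*x^2*(x+1)^2 + 60*x*(x+1) - 11)

noncomputable def Shi (x : ℝ) : ℝ :=
  1/(3*(x+1)^3) + 1/(5*(x+1)^5) + 1/(7*(x+1)^7) + 1/(9*(x+1)^9) + 1/(11*(x+1)^11)
    + 1/(13*(x+1)^13) + 1/(15*(x+1)^15) + 1/(x*(x+1)^16)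

noncomputable def Slo (x : ℝ) : ℝ :=
  1/(3*(x+1)^3) + 1/(5*(x+1)^5) + 1/(7*(x+1)^7) + 1/(9*(x+1)^9) + 1/(11*(x+1)^11)
    + 1/(13*(x+1)^13) + 1/(15*(x+1)^15) - 1/(x*(x+1)^16)

lemma lam_eq (n : ℕ) : lam n = 1 / dd n - 6 * n * (n + 1) := rfl

lemma artanh_sum_bound {u : ℝ} (h0 : 0 < u) (h1 : u < 1) :
    |(1/2) * Real.log ((1+u)/(1-u)) -
      (u + u^3/3 + u^5/5 + u^7/7 + u^9/9 + u^11/11 + u^13/13 + u^15/15)| ≤ u^17/(1-u) := by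
  have hu : |u| < 1 := by rwa [abs_of_pos h0]
  have hmu : |(-u)| < 1 := by rwa [abs_neg, abs_of_pos h0]
  have A := Real.abs_log_sub_add_sum_range_le hu 16
  have B := Real.abs_log_sub_add_sum_range_le hmu 16
  rw [abs_of_pos h0] at A
  rw [abs_neg, abs_of_pos h0] at B
  have eA : ∑ i ∈ Finset.range 16, u^(i+1)/(i+1) =
      u + u^2/2 + u^3/3 + u^4/4 + u^5/5 + u^6/6 + u^7/7 + u^8/8 + u^9/9 + u^10/10
        + u^11/11 + u^12/12 + u^13/13 + u^14/14 + u^15/15 + u^16/16 := by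
    simp [Finset.sum_range_succ]
    norm_num
  have eB : ∑ i ∈ Finset.range 16, (-u)^(i+1)/(i+1) =
      -(u - u^2/2 + u^3/3 - u^4/4 + u^5/5 - u^6/6 + u^7/7 - u^8/8 + u^9/9 - u^10/10
        + u^11/11 - u^12/12 + u^13/13 - u^14/14 + u^15/15 - u^16/16) := by
    simp [Finset.sum_range_succ]
    norm_num
    ring
  rw [eA] at A
  rw [eB] at B
  have hne1 : (1:ℝ) + u > 0 := by linarith
  have hne2 : (1:ℝ) - u > 0 := by linarith
  have key : (1/2) * Real.log ((1+u)/(1-u)) -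
      (u + u^3/3 + u^5/5 + u^7/7 + u^9/9 + u^11/11 + u^13/13 + u^15/15) =
      (1/2) * ((-(u - u^2/2 + u^3/3 - u^4/4 + u^5/5 - u^6/6 + u^7/7 - u^8/8 + u^9/9 - u^10/10
        + u^11/11 - u^12/12 + u^13/13 - u^14/14 + u^15/15 - u^16/16) + Real.log (1 - -u)) -
        ((u + u^2/2 + u^3/3 + u^4/4 + u^5/5 + u^6/6 + u^7/7 + u^8/8 + u^9/9 + u^10/10
        + u^11/11 + u^12/12 + u^13/13 + u^14/14 + u^15/15 + u^16/16) + Real.log (1 - u))) := by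
    rw [Real.log_div (ne_of_gt hne1) (ne_of_gt hne2)]
    have : (1:ℝ) - -u = 1 + u := by ring
    rw [this]
    ring
  rw [key]
  have h3 := (abs_sub _ _).trans (add_le_add B A)
  have e17 : u^(16+1)/(1-u) = u^17/(1-u) := by norm_num
  rw [e17] at h3
  rw [abs_mul, abs_of_pos (show (0:ℝ) < 1/2 by norm_num)]
  linarith [h3]


lemma hQpos {x : ℝ} (hx : 1 ≤ x) : (0:ℝ) < 300*x^2*(x+1)^2 + 60*x*(x+1) - 11 := by
  nlinarith

lemma gR_pos {x : ℝ} (hx : 1 ≤ x) : 0 < gR x := by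
  have h := hQpos hx
  have hx0 : (0:ℝ) < x := by linarith
  simp only [gR]
  positivity

lemma gR_le {x : ℝ} (hx : 1 ≤ x) : gR x ≤ 1 / x := by
  have h := hQpos hx
  have hx0 : (0:ℝ) < x := by linarith
  rw [gR, div_le_div_iff₀ h hx0]
  nlinarith

lemma Slo_pos {x : ℝ} (hx : 1 ≤ x) : 0 < Slo x := by
  have hx0 : (0:ℝ) < x := by linarith
  have hx1 : (0:ℝ) < x + 1 := by linarith
  have hy : (0:ℝ) ≤ x - 1 := by linarith
  have key : Slo x = (145508393 + 1063990197*(x-1) + 3604050589*(x-1)^2 + 7501071575*(x-1)^3 + 10720077375*(x-1)^4 + 11131417297*(x-1)^5 + 8662395833*(x-1)^6 + 5133104691*(x-1)^7 + 2327891995*(x-1)^8 + 804145485*(x-1)^9 + 208312533*(x-1)^10 + 39246207*(x-1)^11 + 5084079*(x-1)^12 + 405405*(x-1)^13 + 15015*(x-1)^14) / (45045*x*(x+1)^16) := by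
    have h1 : x ≠ 0 := ne_of_gt hx0
    have h2 : x + 1 ≠ 0 := ne_of_gt hx1
    simp only [Slo]
    field_simp
    ring
  rw [key]
  apply div_pos
  · nlinarith [pow_nonneg hy 2, pow_nonneg hy 3, pow_nonneg hy 4, pow_nonneg hy 5, pow_nonneg hy 6, pow_nonneg hy 7, pow_nonneg hy 8, pow_nonneg hy 9, pow_nonneg hy 10, pow_nonneg hy 11, pow_nonneg hy 12, pow_nonneg hy 13, pow_nonneg hy 14, hy]
  · positivity

lemma lemA {x : ℝ} (hx : 2 ≤ x) : Shi x ≤ gR x - gR (x+1) := by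
  have hx0 : (0:ℝ) < x := by linarith
  have hx1 : (0:ℝ) < x + 1 := by linarith
  have hQ : (0:ℝ) < 300*x^2*(x+1)^2 + 60*x*(x+1) - 11 := by nlinarith
  have hQ1 : (0:ℝ) < 300*(x+1)^2*(x+1+1)^2 + 60*(x+1)*(x+1+1) - 11 := by nlinarith
  have hy : (0:ℝ) ≤ x - 2 := by linarith
  have key : gR x - gR (x+1) - Shi x =
      (6360424350937281 + 35052004167235305*(x-2) + 90637917516646221*(x-2)^2 + 146096900131740345*(x-2)^3 + 164446098554034045*(x-2)^4 + 137203314274665621*(x-2)^5 + 87891871221955425*(x-2)^6 + 44177044070317111*(x-2)^7 + 17653031448783395*(x-2)^8 + 5648146415642295*(x-2)^9 + 1450449733509171*(x-2)^10 + 298478216460075*(x-2)^11 + 48956856779811*(x-2)^12 + 6341400933465*(x-2)^13 + 639519134865*(x-2)^14 + 49085922600*(x-2)^15 + 2749546800*(x-2)^16 + 102316500*(x-2)^17 + 1930500*(x-2)^18) /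
      (45045*x*(x+1)^16*(300*x^2*(x+1)^2 + 60*x*(x+1) - 11)*(300*(x+1)^2*(x+1+1)^2 + 60*(x+1)*(x+1+1) - 11)) := by
    have h1 : x ≠ 0 := ne_of_gt hx0
    have h2 : x + 1 ≠ 0 := ne_of_gt hx1
    have h3 : 300*x^2*(x+1)^2 + 60*x*(x+1) - 11 ≠ 0 := ne_of_gt hQ
    have h4 : 300*(x+1)^2*(x+1+1)^2 + 60*(x+1)*(x+1+1) - 11 ≠ 0 := ne_of_gt hQ1
    simp only [gR, Shi]
    rw [div_sub_div _ _ h3 h4, div_add_div _ _ (by positivity) (by positivity), div_add_div _ _ (by positivity) (by positivity), div_add_div _ _ (by positivity) (by positivity), div_add_div _ _ (by positivity) (by positivity), div_add_div _ _ (by positivity) (by positivity), div_add_div _ _ (by positivity) (by positivity), div_add_div _ _ (by positivity) (by positivity), div_sub_div _ _ (by positivity) (by positivity), div_eq_div_iff (by positivity) (by positivity)]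
    ring
  have hden : (0:ℝ) < 45045*x*(x+1)^16*(300*x^2*(x+1)^2 + 60*x*(x+1) - 11)*(300*(x+1)^2*(x+1+1)^2 + 60*(x+1)*(x+1+1) - 11) := by positivity
  have hnum : (0:ℝ) ≤ (6360424350937281 + 35052004167235305*(x-2) + 90637917516646221*(x-2)^2 + 146096900131740345*(x-2)^3 + 164446098554034045*(x-2)^4 + 137203314274665621*(x-2)^5 + 87891871221955425*(x-2)^6 + 44177044070317111*(x-2)^7 + 17653031448783395*(x-2)^8 + 5648146415642295*(x-2)^9 + 1450449733509171*(x-2)^10 + 298478216460075*(x-2)^11 + 48956856779811*(x-2)^12 + 6341400933465*(x-2)^13 + 639519134865*(x-2)^14 + 49085922600*(x-2)^15 + 2749546800*(x-2)^16 + 102316500*(x-2)^17 + 1930500*(x-2)^18) := by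
    nlinarith [pow_nonneg hy 2, pow_nonneg hy 3, pow_nonneg hy 4, pow_nonneg hy 5, pow_nonneg hy 6, pow_nonneg hy 7, pow_nonneg hy 8, pow_nonneg hy 9, pow_nonneg hy 10, pow_nonneg hy 11, pow_nonneg hy 12, pow_nonneg hy 13, pow_nonneg hy 14, pow_nonneg hy 15, pow_nonneg hy 16, pow_nonneg hy 17, pow_nonneg hy 18, hy]
  nlinarith [div_nonneg hnum hden.le, key]

lemma lemB {x : ℝ} (hx : 2 ≤ x) : 12*(x+1)*(gR x * gR (x+1)) < Slo x := by
  have hx0 : (0:ℝ) < x := by linarith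
  have hx1 : (0:ℝ) < x + 1 := by linarith
  have hQ : (0:ℝ) < 300*x^2*(x+1)^2 + 60*x*(x+1) - 11 := by nlinarith
  have hQ1 : (0:ℝ) < 300*(x+1)^2*(x+1+1)^2 + 60*(x+1)*(x+1+1) - 11 := by nlinarith
  have hy : (0:ℝ) ≤ x - 2 := by linarith
  have key : Slo x - 12*(x+1)*(gR x * gR (x+1)) =
      (6393133873780029 + 43743470683156995*(x-2) + 138859012091600079*(x-2)^2 + 272804616425783655*(x-2)^3 + 372695446195775955*(x-2)^4 + 376692380639936379*(x-2)^5 + 292314249706678575*(x-2)^6 + 178257462035494889*(x-2)^7 + 86667110771510605*(x-2)^8 + 33867062042082705*(x-2)^9 + 10667547526859829*(x-2)^10 + 2703081052247925*(x-2)^11 + 547097466084189*(x-2)^12 + 87269694644535*(x-2)^13 + 10732091115135*(x-2)^14 + 981940073400*(x-2)^15 + 62953090200*(x-2)^16 + 2523807000*(x-2)^17 + 47619000*(x-2)^18) /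
      (45045*x*(x+1)^16*(300*x^2*(x+1)^2 + 60*x*(x+1) - 11)*(300*(x+1)^2*(x+1+1)^2 + 60*(x+1)*(x+1+1) - 11)) := by
    have h1 : x ≠ 0 := ne_of_gt hx0
    have h2 : x + 1 ≠ 0 := ne_of_gt hx1
    have h3 : 300*x^2*(x+1)^2 + 60*x*(x+1) - 11 ≠ 0 := ne_of_gt hQ
    have h4 : 300*(x+1)^2*(x+1+1)^2 + 60*(x+1)*(x+1+1) - 11 ≠ 0 := ne_of_gt hQ1
    simp only [gR, Slo]
    rw [div_mul_div_comm, mul_div_assoc', div_add_div _ _ (by positivity) (by positivity), div_add_div _ _ (by positivity) (by positivity), div_add_div _ _ (by positivity) (by positivity), div_add_div _ _ (by positivity) (by positivity), div_add_div _ _ (by positivity) (by positivity), div_add_div _ _ (by positivity) (by positivity), div_sub_div _ _ (by positivity) (by positivity), div_sub_div _ _ (by positivity) (by positivity), div_eq_div_iff (by positivity) (by positivity)]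
    ring
  have hden : (0:ℝ) < 45045*x*(x+1)^16*(300*x^2*(x+1)^2 + 60*x*(x+1) - 11)*(300*(x+1)^2*(x+1+1)^2 + 60*(x+1)*(x+1+1) - 11) := by positivity
  have hnum : (0:ℝ) < (6393133873780029 + 43743470683156995*(x-2) + 138859012091600079*(x-2)^2 + 272804616425783655*(x-2)^3 + 372695446195775955*(x-2)^4 + 376692380639936379*(x-2)^5 + 292314249706678575*(x-2)^6 + 178257462035494889*(x-2)^7 + 86667110771510605*(x-2)^8 + 33867062042082705*(x-2)^9 + 10667547526859829*(x-2)^10 + 2703081052247925*(x-2)^11 + 547097466084189*(x-2)^12 + 87269694644535*(x-2)^13 + 10732091115135*(x-2)^14 + 981940073400*(x-2)^15 + 62953090200*(x-2)^16 + 2523807000*(x-2)^17 + 47619000*(x-2)^18) := by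
    nlinarith [pow_nonneg hy 2, pow_nonneg hy 3, pow_nonneg hy 4, pow_nonneg hy 5, pow_nonneg hy 6, pow_nonneg hy 7, pow_nonneg hy 8, pow_nonneg hy 9, pow_nonneg hy 10, pow_nonneg hy 11, pow_nonneg hy 12, pow_nonneg hy 13, pow_nonneg hy 14, pow_nonneg hy 15, pow_nonneg hy 16, pow_nonneg hy 17, pow_nonneg hy 18, hy]
  nlinarith [div_pos hnum hden, key]

/-- The step identity together with the series bounds. -/
lemma dd_step_lo {n : ℕ} (hn : 1 ≤ n) : Slo n ≤ dd n - dd (n+1) := by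
  have hx1 : (1:ℝ) ≤ (n:ℝ) := by exact_mod_cast hn
  have hx0 : (0:ℝ) < (n:ℝ) := by linarith
  have hxp1 : (0:ℝ) < (n:ℝ) + 1 := by linarith
  set x : ℝ := (n:ℝ) with hx
  set u : ℝ := 1/(x+1) with hu
  have hu0 : 0 < u := by positivity
  have hu1 : u < 1 := by
    rw [hu, div_lt_one hxp1]; linarith
  -- step identity
  have hstep : dd n - dd (n+1) = (1/2) * Real.log ((1+u)/(1-u)) - u := by
    have hH : H (n+1) = H n + 1/((n:ℝ)+1) := by
      simp [H, Finset.sum_range_succ]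
    have hlog1 : Real.log (x*(x+1)) = Real.log x + Real.log (x+1) :=
      Real.log_mul (ne_of_gt hx0) (ne_of_gt hxp1)
    have hlog2 : Real.log ((x+1)*(x+1+1)) = Real.log (x+1) + Real.log (x+2) := by
      rw [show (x+1+1) = x+2 by ring]
      exact Real.log_mul (by positivity) (by positivity)
    have hrat : (1+u)/(1-u) = (x+2)/x := by
      rw [hu]
      field_simp
      ring_nf
      field_simp
    have hlog3 : Real.log ((1+u)/(1-u)) = Real.log (x+2) - Real.log x := by
      rw [hrat, Real.log_div (by positivity) (ne_of_gt hx0)]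
    simp only [dd, hH]
    push_cast
    rw [hlog1, hlog2, hlog3]
    ring
  have hb := artanh_sum_bound hu0 hu1
  rw [abs_le] at hb
  have hbridge : u + u^3/3 + u^5/5 + u^7/7 + u^9/9 + u^11/11 + u^13/13 + u^15/15
      - u^17/(1-u) - u = Slo x := by
    have h2 : x + 1 ≠ 0 := ne_of_gt hxp1
    have h1 : x ≠ 0 := ne_of_gt hx0
    rw [hu]
    simp only [Slo]
    rw [show (1 - 1/(x+1)) = x/(x+1) by field_simp; ring]
    field_simp
    ring
  rw [hstep]
  linarith [hb.1]

lemma dd_step_hi {n : ℕ} (hn : 1 ≤ n) : dd n - dd (n+1) ≤ Shi n := by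
  have hx1 : (1:ℝ) ≤ (n:ℝ) := by exact_mod_cast hn
  have hx0 : (0:ℝ) < (n:ℝ) := by linarith
  have hxp1 : (0:ℝ) < (n:ℝ) + 1 := by linarith
  set x : ℝ := (n:ℝ) with hx
  set u : ℝ := 1/(x+1) with hu
  have hu0 : 0 < u := by positivity
  have hu1 : u < 1 := by rw [hu, div_lt_one hxp1]; linarith
  have hstep : dd n - dd (n+1) = (1/2) * Real.log ((1+u)/(1-u)) - u := by
    have hH : H (n+1) = H n + 1/((n:ℝ)+1) := by
      simp [H, Finset.sum_range_succ]
    have hlog1 : Real.log (x*(x+1)) = Real.log x + Real.log (x+1) :=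
      Real.log_mul (ne_of_gt hx0) (ne_of_gt hxp1)
    have hlog2 : Real.log ((x+1)*(x+1+1)) = Real.log (x+1) + Real.log (x+2) := by
      rw [show (x+1+1) = x+2 by ring]
      exact Real.log_mul (by positivity) (by positivity)
    have hrat : (1+u)/(1-u) = (x+2)/x := by
      rw [hu]; field_simp; ring_nf; field_simp
    have hlog3 : Real.log ((1+u)/(1-u)) = Real.log (x+2) - Real.log x := by
      rw [hrat, Real.log_div (by positivity) (ne_of_gt hx0)]
    simp only [dd, hH]
    push_cast
    rw [hlog1, hlog2, hlog3]
    ring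
  have hb := artanh_sum_bound hu0 hu1
  rw [abs_le] at hb
  have hbridge : u + u^3/3 + u^5/5 + u^7/7 + u^9/9 + u^11/11 + u^13/13 + u^15/15
      + u^17/(1-u) - u = Shi x := by
    have h2 : x + 1 ≠ 0 := ne_of_gt hxp1
    have h1 : x ≠ 0 := ne_of_gt hx0
    rw [hu]
    simp only [Shi]
    rw [show (1 - 1/(x+1)) = x/(x+1) by field_simp; ring]
    field_simp
    ring
  rw [hstep]
  linarith [hb.2]

lemma tendsto_dd : Tendsto dd atTop (𝓝 0) := by
  have h1 : Tendsto (fun n : ℕ => (harmonic n : ℝ) - Real.log (n+1)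
      - Real.eulerMascheroniConstant) atTop (𝓝 0) := by
    have := Real.tendsto_eulerMascheroniSeq.sub_const Real.eulerMascheroniConstant
    rw [sub_self] at this
    exact this
  have h2 : Tendsto (fun n : ℕ => Real.log (1 + (n:ℝ)⁻¹)) atTop (𝓝 0) := by
    have hb : Tendsto (fun n : ℕ => 1 + (n:ℝ)⁻¹) atTop (𝓝 1) := by
      simpa using tendsto_const_nhds.add (tendsto_inv_atTop_nhds_zero_nat (𝕜 := ℝ))
    have := hb.log one_ne_zero
    simpa using this
  have h3 : Tendsto (fun n : ℕ => ((harmonic n : ℝ) - Real.log (n+1)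
      - Real.eulerMascheroniConstant) + (1/2) * Real.log (1 + (n:ℝ)⁻¹)) atTop (𝓝 0) := by
    have := h1.add (h2.const_mul (1/2:ℝ))
    simpa using this
  apply h3.congr'
  filter_upwards [eventually_ge_atTop 1] with n hn
  have hx1 : (1:ℝ) ≤ (n:ℝ) := by exact_mod_cast hn
  have hx0 : (0:ℝ) < (n:ℝ) := by linarith
  have hH : H n = (harmonic n : ℝ) := by
    rw [H]
    push_cast [harmonic]
    simp [one_div]
  have hlog1 : Real.log ((n:ℝ)*((n:ℝ)+1)) = Real.log n + Real.log ((n:ℝ)+1) :=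
    Real.log_mul (ne_of_gt hx0) (by positivity)
  have hlog2 : Real.log (1 + (n:ℝ)⁻¹) = Real.log ((n:ℝ)+1) - Real.log n := by
    rw [show (1 + (n:ℝ)⁻¹) = ((n:ℝ)+1)/n by field_simp]
    exact Real.log_div (by positivity) (ne_of_gt hx0)
  simp only [dd, hH, hlog1, hlog2]
  ring

lemma tendsto_gR : Tendsto (fun n : ℕ => gR n) atTop (𝓝 0) := by
  apply squeeze_zero' (t₀ := atTop)
  · filter_upwards [eventually_ge_atTop 1] with n hn
    exact (gR_pos (by exact_mod_cast hn)).le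
  · filter_upwards [eventually_ge_atTop 1] with n hn
    exact gR_le (by exact_mod_cast hn)
  · exact tendsto_one_div_atTop_nhds_zero_nat

lemma dd_nonneg {n : ℕ} (hn : 1 ≤ n) : 0 ≤ dd n := by
  have mono : ∀ m, n ≤ m → dd m ≤ dd n := by
    intro m hm
    induction m, hm using Nat.le_induction with
    | base => exact le_refl _
    | succ k hk ih =>
      have hk1 : 1 ≤ k := le_trans hn hk
      have h1 := dd_step_lo hk1
      have h2 := Slo_pos (x := (k:ℝ)) (by exact_mod_cast hk1)
      linarith
  exact le_of_tendsto tendsto_dd (by filter_upwards [eventually_ge_atTop n] with m hm; exact mono m hm)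

lemma dd_pos {n : ℕ} (hn : 1 ≤ n) : 0 < dd n := by
  have h1 := dd_step_lo hn
  have h2 := Slo_pos (x := (n:ℝ)) (by exact_mod_cast hn)
  have h3 := dd_nonneg (n := n+1) (by omega)
  linarith

lemma dd_le_gR {n : ℕ} (hn : 2 ≤ n) : dd n ≤ gR n := by
  have mono : ∀ m, n ≤ m → gR n - dd n ≥ gR m - dd m := by
    intro m hm
    induction m, hm using Nat.le_induction with
    | base => exact le_refl _
    | succ k hk ih =>
      have hk2 : 2 ≤ k := le_trans hn hk
      have hk1 : 1 ≤ k := by omega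
      have hA := lemA (x := (k:ℝ)) (by exact_mod_cast hk2)
      have hhi := dd_step_hi hk1
      have hcast : ((k+1 : ℕ) : ℝ) = (k:ℝ) + 1 := by push_cast; ring
      rw [ge_iff_le, hcast]
      linarith
  have hlim : Tendsto (fun m : ℕ => gR m - dd m) atTop (𝓝 0) := by
    have := tendsto_gR.sub tendsto_dd
    simpa using this
  have := le_of_tendsto hlim (by
    filter_upwards [eventually_ge_atTop n] with m hm
    exact mono m hm)
  linarith

lemma step_ge2 {n : ℕ} (hn : 2 ≤ n) : lam n < lam (n+1) := by
  have hn1 : 1 ≤ n := by omega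
  set x : ℝ := (n:ℝ) with hx
  have hx2 : (2:ℝ) ≤ x := by rw [hx]; exact_mod_cast hn
  have hcast : ((n+1 : ℕ) : ℝ) = x + 1 := by push_cast; ring
  have hd1 : 0 < dd n := dd_pos hn1
  have hd2 : 0 < dd (n+1) := dd_pos (by omega)
  have hg1 : dd n ≤ gR x := dd_le_gR hn
  have hg2 : dd (n+1) ≤ gR (x+1) := by
    have := dd_le_gR (n := n+1) (by omega)
    rwa [hcast] at this
  have hgp1 : 0 < gR x := gR_pos (by linarith)
  have hgp2 : 0 < gR (x+1) := gR_pos (by linarith)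
  have hB := lemB hx2
  have hSlo := dd_step_lo hn1
  have key : 12*(x+1)*(dd n * dd (n+1)) < dd n - dd (n+1) := by
    have hmm : dd n * dd (n+1) ≤ gR x * gR (x+1) := by
      apply mul_le_mul hg1 hg2 hd2.le hgp1.le
    have h12 : (0:ℝ) < 12*(x+1) := by linarith
    have := mul_le_mul_of_nonneg_left hmm h12.le
    linarith
  have hinv : 12*(x+1) < 1/dd (n+1) - 1/dd n := by
    rw [div_sub_div _ _ (ne_of_gt hd2) (ne_of_gt hd1)]
    rw [lt_div_iff₀ (by positivity)]
    nlinarith [key]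
  rw [lam_eq, lam_eq, hcast]
  push_cast
  nlinarith [hinv]

lemma step_one : lam 1 < lam 2 := by
  have hd1 : 0 < dd 1 := dd_pos (by norm_num)
  have hd2 : 0 < dd 2 := dd_pos (by norm_num)
  have hg2 : dd 2 ≤ gR 2 := by
    have := dd_le_gR (n := 2) (by norm_num)
    exact_mod_cast this
  have hlo : Slo 1 ≤ dd 1 - dd 2 := by
    have := dd_step_lo (n := 1) (by norm_num)
    exact_mod_cast this
  have hhi : dd 1 - dd 2 ≤ Shi 1 := by
    have := dd_step_hi (n := 1) (by norm_num)
    exact_mod_cast this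
  have hd1u : dd 1 ≤ Shi 1 + gR 2 := by linarith
  have hnum : 24*((Shi 1 + gR 2) * gR 2) < Slo 1 := by
    simp only [Shi, Slo, gR]
    norm_num
  have key : 24*(dd 1 * dd 2) < dd 1 - dd 2 := by
    have hmm : dd 1 * dd 2 ≤ (Shi 1 + gR 2) * gR 2 := by
      apply mul_le_mul hd1u hg2 hd2.le
      have := gR_pos (x := 2) (by norm_num)
      have := Slo_pos (x := 1) (by norm_num)
      nlinarith [hhi]
    nlinarith [hmm, hlo, hnum]
  have hinv : 24 < 1/dd 2 - 1/dd 1 := by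
    rw [div_sub_div _ _ (ne_of_gt hd2) (ne_of_gt hd1)]
    rw [lt_div_iff₀ (by positivity)]
    nlinarith [key]
  have e1 : lam 1 = 1/dd 1 - 12 := by rw [lam_eq]; norm_num
  have e2 : lam 2 = 1/dd 2 - 36 := by rw [lam_eq]; norm_num
  rw [e1, e2]
  linarith

lemma step_all {n : ℕ} (hn : 1 ≤ n) : lam n < lam (n+1) := by
  rcases Nat.lt_or_ge n 2 with h | h
  · have : n = 1 := by omega
    rw [this]; exact step_one
  · exact step_ge2 h

theorem stmt4 (m n : ℕ) (hm : 1 ≤ m) (hmn : m < n) : lam m < lam n := by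
  induction n with
  | zero => omega
  | succ k ih =>
    rcases Nat.lt_or_ge m k with h | h
    · have h1 := ih h
      have h2 := step_all (n := k) (by omega)
      linarith
    · have : k = m := by omega
      rw [this] at *
      exact step_all hm
end

section
/- The sequence λ_n := 1/(H_n - (1/2)ln(n(n+1)) - γ) - 6n(n+1) converges to 6/5 as n → ∞. -/
open Real Filter Topology

/-- The deviation `H n - (1/2) log (n(n+1)) - γ`. -/
noncomputable def Dd (n : ℕ) : ℝ :=
  H n - (1 / 2) * Real.log (n * (n + 1)) - Real.eulerMascheroniConstant

/-- The summand `c k = (1/2) log ((k+1)/(k-1)) - 1/k`. -/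
noncomputable def cc (k : ℕ) : ℝ :=
  (1 / 2) * (Real.log ((k : ℝ) + 1) - Real.log ((k : ℝ) - 1)) - 1 / (k : ℝ)

/-- Comparison function `1/(6k² + 6k + a)`. -/
noncomputable def gg (a : ℝ) (k : ℕ) : ℝ := 1 / (6 * (k : ℝ) ^ 2 + 6 * (k : ℝ) + a)

lemma Dd_step (m : ℕ) (hm : 1 ≤ m) : Dd m = Dd (m + 1) + cc (m + 1) := by
  have hm0 : (0 : ℝ) < (m : ℝ) := by exact_mod_cast hm
  have h1 : (0 : ℝ) < (m : ℝ) + 1 := by linarith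
  have h2 : (0 : ℝ) < (m : ℝ) + 2 := by linarith
  have hH : H (m + 1) = H m + 1 / ((m : ℝ) + 1) := by
    simp [H, Finset.sum_range_succ]
  have hl1 : Real.log ((m : ℝ) * ((m : ℝ) + 1)) = Real.log m + Real.log ((m : ℝ) + 1) :=
    Real.log_mul hm0.ne' h1.ne'
  have hl2 : Real.log (((m : ℝ) + 1) * ((m : ℝ) + 2)) =
      Real.log ((m : ℝ) + 1) + Real.log ((m : ℝ) + 2) :=
    Real.log_mul h1.ne' h2.ne'
  simp only [Dd, cc, hH]
  push_cast
  rw [hl1]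
  rw [show ((m : ℝ) + 1) * ((m : ℝ) + 1 + 1) = ((m : ℝ) + 1) * ((m : ℝ) + 2) by ring, hl2]
  ring

lemma Dd_tele (n : ℕ) (hn : 1 ≤ n) : ∀ m, n ≤ m →
    Dd n = Dd m + ∑ k ∈ Finset.Ico n m, cc (k + 1) := by
  intro m hm
  induction m, hm using Nat.le_induction with
  | base => simp
  | succ m hm ih =>
    rw [ih, Finset.sum_Ico_succ_top hm, Dd_step m (le_trans hn hm)]
    ring

lemma gg_tele (a : ℝ) (n : ℕ) : ∀ m, n ≤ m →
    ∑ k ∈ Finset.Ico n m, (gg a k - gg a (k + 1)) = gg a n - gg a m := by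
  intro m hm
  induction m, hm using Nat.le_induction with
  | base => simp
  | succ m hm ih =>
    rw [Finset.sum_Ico_succ_top hm, ih]
    ring

lemma Dd_tendsto : Tendsto Dd atTop (𝓝 0) := by
  have h1 : Tendsto (fun n : ℕ ↦ (harmonic n : ℝ) - Real.log n) atTop
      (𝓝 Real.eulerMascheroniConstant) := Real.tendsto_harmonic_sub_log
  have h2 : Tendsto (fun n : ℕ ↦ Real.log (1 + 1 / (n : ℝ))) atTop (𝓝 0) := by
    have : Tendsto (fun n : ℕ ↦ 1 + 1 / (n : ℝ)) atTop (𝓝 1) := by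
      simpa using (tendsto_one_div_atTop_nhds_zero_nat (𝕜 := ℝ)).const_add 1
    simpa [Function.comp_def] using (Real.continuousAt_log (by norm_num)).tendsto.comp this
  have key : Tendsto (fun n : ℕ ↦ ((harmonic n : ℝ) - Real.log n)
      - Real.eulerMascheroniConstant - (1 / 2) * Real.log (1 + 1 / (n : ℝ))) atTop (𝓝 0) := by
    have := (h1.sub_const Real.eulerMascheroniConstant).sub (h2.const_mul (1 / 2))
    simpa using this
  apply key.congr'
  filter_upwards [eventually_ge_atTop 1] with n hn
  have hn0 : (0 : ℝ) < (n : ℝ) := by exact_mod_cast hn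
  have hH : H n = (harmonic n : ℝ) := by
    simp only [H, harmonic, Rat.cast_sum, Rat.cast_inv, Rat.cast_natCast]
    push_cast
    simp [one_div]
  have hl1 : Real.log ((n : ℝ) * ((n : ℝ) + 1)) = Real.log n + Real.log ((n : ℝ) + 1) :=
    Real.log_mul hn0.ne' (by linarith)
  have hl2 : Real.log (1 + 1 / (n : ℝ)) = Real.log ((n : ℝ) + 1) - Real.log n := by
    rw [show (1 : ℝ) + 1 / n = ((n : ℝ) + 1) / n by field_simp]
    exact Real.log_div (by linarith) hn0.ne'
  simp only [Dd, hH, hl1, hl2]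
  ring

lemma log_bound {x : ℝ} (hx : 0 < x) (hx2 : x ≤ 1 / 2) :
    |(1 / 2) * (Real.log (1 + x) - Real.log (1 - x)) - (x + x ^ 3 / 3 + x ^ 5 / 5)| ≤
      2 * x ^ 7 := by
  have hax : |x| < 1 := by rw [abs_of_pos hx]; linarith
  have hax' : |(-x)| < 1 := by rwa [abs_neg]
  have b1 := Real.abs_log_sub_add_sum_range_le hax 6
  have b2 := Real.abs_log_sub_add_sum_range_le hax' 6
  rw [abs_of_pos hx] at b1
  rw [abs_neg, abs_of_pos hx] at b2
  have hden : x ^ 7 / (1 - x) ≤ 2 * x ^ 7 := by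
    rw [div_le_iff₀ (by linarith)]
    nlinarith [pow_pos hx 7]
  have e1 : (∑ i ∈ Finset.range 6, x ^ (i + 1) / (i + 1)) =
      x + x ^ 2 / 2 + x ^ 3 / 3 + x ^ 4 / 4 + x ^ 5 / 5 + x ^ 6 / 6 := by
    rw [Finset.sum_range_succ, Finset.sum_range_succ, Finset.sum_range_succ,
      Finset.sum_range_succ, Finset.sum_range_succ, Finset.sum_range_succ,
      Finset.sum_range_zero]
    norm_num
  have e2 : (∑ i ∈ Finset.range 6, (-x) ^ (i + 1) / (i + 1)) =
      -x + x ^ 2 / 2 - x ^ 3 / 3 + x ^ 4 / 4 - x ^ 5 / 5 + x ^ 6 / 6 := by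
    rw [Finset.sum_range_succ, Finset.sum_range_succ, Finset.sum_range_succ,
      Finset.sum_range_succ, Finset.sum_range_succ, Finset.sum_range_succ,
      Finset.sum_range_zero]
    norm_num
    ring
  rw [e1] at b1
  rw [e2, show (1 : ℝ) - -x = 1 + x by ring] at b2
  rw [abs_le] at b1 b2 ⊢
  constructor <;> nlinarith [b1.1, b1.2, b2.1, b2.2]

lemma cc_bound {k : ℕ} (hk : 2 ≤ k) :
    |cc k - (1 / (3 * (k : ℝ) ^ 3) + 1 / (5 * (k : ℝ) ^ 5))| ≤ 2 / (k : ℝ) ^ 7 := by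
  have hk0 : (2 : ℝ) ≤ (k : ℝ) := by exact_mod_cast hk
  have hkpos : (0 : ℝ) < (k : ℝ) := by linarith
  obtain ⟨x, hxdef⟩ : ∃ x : ℝ, x = 1 / (k : ℝ) := ⟨_, rfl⟩
  have hx : 0 < x := by rw [hxdef]; positivity
  have hx2 : x ≤ 1 / 2 := by
    rw [hxdef, div_le_div_iff₀ hkpos (by norm_num)]
    linarith
  have hl1 : Real.log ((k : ℝ) + 1) = Real.log k + Real.log (1 + x) := by
    rw [← Real.log_mul hkpos.ne' (by positivity)]
    congr 1
    rw [hxdef]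
    field_simp
  have hl2 : Real.log ((k : ℝ) - 1) = Real.log k + Real.log (1 - x) := by
    rw [← Real.log_mul hkpos.ne' (by rw [hxdef]; intro h; nlinarith [(sub_eq_zero.mp h)])]
    congr 1
    rw [hxdef]
    field_simp
  have hcc : cc k = (1 / 2) * (Real.log (1 + x) - Real.log (1 - x)) - x := by
    simp only [cc, hl1, hl2]
    rw [hxdef]
    ring
  have hx3 : 1 / (3 * (k : ℝ) ^ 3) = x ^ 3 / 3 := by rw [hxdef]; field_simp
  have hx5 : 1 / (5 * (k : ℝ) ^ 5) = x ^ 5 / 5 := by rw [hxdef]; field_simp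
  have hx7 : 2 / (k : ℝ) ^ 7 = 2 * x ^ 7 := by rw [hxdef]; field_simp
  rw [hcc, hx3, hx5, hx7]
  have := log_bound hx hx2
  calc |(1 / 2) * (Real.log (1 + x) - Real.log (1 - x)) - x - (x ^ 3 / 3 + x ^ 5 / 5)|
      = |(1 / 2) * (Real.log (1 + x) - Real.log (1 - x)) - (x + x ^ 3 / 3 + x ^ 5 / 5)| := by
        ring_nf
    _ ≤ 2 * x ^ 7 := this

/-- Key rational inequality, lower side. -/
lemma key_lower {ε m : ℝ} (hε : 0 < ε) (hε1 : ε ≤ 1) (hm3 : 3 ≤ m) (hεm : 200 ≤ ε * m) :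
    1 / (6 * (m - 1) ^ 2 + 6 * (m - 1) + (6 / 5 + ε)) - 1 / (6 * m ^ 2 + 6 * m + (6 / 5 + ε))
      ≤ 1 / (3 * m ^ 3) + 1 / (5 * m ^ 5) - 2 / m ^ 7 := by
  have hmpos : (0 : ℝ) < m := by linarith
  have hPpos : (0 : ℝ) < 6 * (m - 1) ^ 2 + 6 * (m - 1) + (6 / 5 + ε) := by nlinarith
  have hQpos : (0 : ℝ) < 6 * m ^ 2 + 6 * m + (6 / 5 + ε) := by nlinarith
  rw [div_sub_div _ _ hPpos.ne' hQpos.ne']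
  have hrhs : 1 / (3 * m ^ 3) + 1 / (5 * m ^ 5) - 2 / m ^ 7
      = (5 * m ^ 4 + 3 * m ^ 2 - 30) / (15 * m ^ 7) := by
    field_simp
    ring
  rw [hrhs, div_le_div_iff₀ (by positivity) (by positivity)]
  have hA : 12000 * m ^ 5 ≤ 60 * (ε * m ^ 6) := by
    nlinarith [mul_le_mul_of_nonneg_right hεm (by positivity : (0:ℝ) ≤ m ^ 5)]
  have hB : 3 * m ^ 4 ≤ m ^ 5 := by
    nlinarith [mul_le_mul_of_nonneg_right hm3 (by positivity : (0:ℝ) ≤ m ^ 4)]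
  have hC : (81 : ℝ) ≤ m ^ 4 := by nlinarith
  have hD : (0 : ℝ) ≤ (5 * ε ^ 2 + 48 * ε) * m ^ 4 := by positivity
  have hE : (0 : ℝ) ≤ (3 * ε ^ 2 - 352.8 * ε + 652.32) * m ^ 2 := by
    apply mul_nonneg _ (sq_nonneg m)
    nlinarith
  have hF : 30 * (6 / 5 + ε) ^ 2 ≤ 146 := by nlinarith
  nlinarith [hA, hB, hC, hD, hE, hF]

/-- Key rational inequality, upper side. -/
lemma key_upper {ε m : ℝ} (hε : 0 < ε) (hε1 : ε ≤ 1) (hm3 : 3 ≤ m) (hεm : 200 ≤ ε * m) :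
    1 / (3 * m ^ 3) + 1 / (5 * m ^ 5) + 2 / m ^ 7
      ≤ 1 / (6 * (m - 1) ^ 2 + 6 * (m - 1) + (6 / 5 - ε))
        - 1 / (6 * m ^ 2 + 6 * m + (6 / 5 - ε)) := by
  have hmpos : (0 : ℝ) < m := by linarith
  have hPpos : (0 : ℝ) < 6 * (m - 1) ^ 2 + 6 * (m - 1) + (6 / 5 - ε) := by nlinarith
  have hQpos : (0 : ℝ) < 6 * m ^ 2 + 6 * m + (6 / 5 - ε) := by nlinarith
  rw [div_sub_div _ _ hPpos.ne' hQpos.ne']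
  have hlhs : 1 / (3 * m ^ 3) + 1 / (5 * m ^ 5) + 2 / m ^ 7
      = (5 * m ^ 4 + 3 * m ^ 2 + 30) / (15 * m ^ 7) := by
    field_simp
    ring
  rw [hlhs, div_le_div_iff₀ (by positivity) (by positivity)]
  have hA : 12000 * m ^ 5 ≤ 60 * (ε * m ^ 6) := by
    nlinarith [mul_le_mul_of_nonneg_right hεm (by positivity : (0:ℝ) ≤ m ^ 5)]
  have hB : 3 * m ^ 4 ≤ m ^ 5 := by
    nlinarith [mul_le_mul_of_nonneg_right hm3 (by positivity : (0:ℝ) ≤ m ^ 4)]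
  have hC : (81 : ℝ) ≤ m ^ 4 := by nlinarith
  have hD : (5 * (6 / 5 - ε) ^ 2 + 36 * (6 / 5 - ε) + 972) * m ^ 4 ≤ 1024 * m ^ 4 := by
    apply mul_le_mul_of_nonneg_right _ (by positivity)
    nlinarith
  have hE : (0 : ℝ) ≤ (1080 - 360 * (6 / 5 - ε) - 3 * (6 / 5 - ε) ^ 2) * m ^ 2 := by
    apply mul_nonneg _ (sq_nonneg m)
    nlinarith
  have hF : 30 * (6 / 5 - ε) ^ 2 ≤ 146 := by nlinarith
  nlinarith [hA, hB, hC, hD, hE, hF]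

lemma inc_lower {ε : ℝ} (hε : 0 < ε) (hε1 : ε ≤ 1) {k : ℕ} (hk2 : 2 ≤ k)
    (hkε : 200 / ε ≤ (k : ℝ)) :
    gg (6 / 5 + ε) k - gg (6 / 5 + ε) (k + 1) ≤ cc (k + 1) := by
  obtain ⟨m, hmdef⟩ : ∃ m : ℝ, m = (k : ℝ) + 1 := ⟨_, rfl⟩
  have hk0 : (2 : ℝ) ≤ (k : ℝ) := by exact_mod_cast hk2
  have hm3 : (3 : ℝ) ≤ m := by rw [hmdef]; linarith
  have hεm : 200 ≤ ε * m := by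
    rw [div_le_iff₀ hε] at hkε
    rw [hmdef]; nlinarith
  have hcb := cc_bound (k := k + 1) (by omega)
  have hcast : ((k + 1 : ℕ) : ℝ) = m := by rw [hmdef]; push_cast; ring
  rw [hcast, abs_le] at hcb
  have hlow : 1 / (3 * m ^ 3) + 1 / (5 * m ^ 5) - 2 / m ^ 7 ≤ cc (k + 1) := by linarith [hcb.1]
  refine le_trans ?_ hlow
  have h := key_lower hε hε1 hm3 hεm
  have hgg1 : gg (6 / 5 + ε) k = 1 / (6 * (m - 1) ^ 2 + 6 * (m - 1) + (6 / 5 + ε)) := by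
    rw [gg, hmdef]; norm_num
  have hgg2 : gg (6 / 5 + ε) (k + 1) = 1 / (6 * m ^ 2 + 6 * m + (6 / 5 + ε)) := by
    rw [gg, hcast]
  rw [hgg1, hgg2]
  exact h

lemma inc_upper {ε : ℝ} (hε : 0 < ε) (hε1 : ε ≤ 1) {k : ℕ} (hk2 : 2 ≤ k)
    (hkε : 200 / ε ≤ (k : ℝ)) :
    cc (k + 1) ≤ gg (6 / 5 - ε) k - gg (6 / 5 - ε) (k + 1) := by
  obtain ⟨m, hmdef⟩ : ∃ m : ℝ, m = (k : ℝ) + 1 := ⟨_, rfl⟩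
  have hk0 : (2 : ℝ) ≤ (k : ℝ) := by exact_mod_cast hk2
  have hm3 : (3 : ℝ) ≤ m := by rw [hmdef]; linarith
  have hεm : 200 ≤ ε * m := by
    rw [div_le_iff₀ hε] at hkε
    rw [hmdef]; nlinarith
  have hcb := cc_bound (k := k + 1) (by omega)
  have hcast : ((k + 1 : ℕ) : ℝ) = m := by rw [hmdef]; push_cast; ring
  rw [hcast, abs_le] at hcb
  have hup : cc (k + 1) ≤ 1 / (3 * m ^ 3) + 1 / (5 * m ^ 5) + 2 / m ^ 7 := by linarith [hcb.2]
  refine le_trans hup ?_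
  have h := key_upper hε hε1 hm3 hεm
  have hgg1 : gg (6 / 5 - ε) k = 1 / (6 * (m - 1) ^ 2 + 6 * (m - 1) + (6 / 5 - ε)) := by
    rw [gg, hmdef]; norm_num
  have hgg2 : gg (6 / 5 - ε) (k + 1) = 1 / (6 * m ^ 2 + 6 * m + (6 / 5 - ε)) := by
    rw [gg, hcast]
  rw [hgg1, hgg2]
  exact h

lemma gg_tendsto {a : ℝ} (ha : 0 < a) : Tendsto (gg a) atTop (𝓝 0) := by
  have h1 : Tendsto (fun m : ℕ ↦ 6 * (m : ℝ) ^ 2 + 6 * (m : ℝ) + a) atTop atTop := by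
    apply tendsto_atTop_mono (f := fun m : ℕ ↦ (m : ℝ))
    · intro m
      nlinarith [sq_nonneg ((m : ℝ) - 1), Nat.cast_nonneg (α := ℝ) m]
    · exact tendsto_natCast_atTop_atTop
  have := tendsto_inv_atTop_zero.comp h1
  apply this.congr
  intro n
  simp [gg, one_div, Function.comp]

lemma Dd_bounds {ε : ℝ} (hε : 0 < ε) (hε1 : ε ≤ 1) {n : ℕ} (hn2 : 2 ≤ n)
    (hnε : 200 / ε ≤ (n : ℝ)) :
    gg (6 / 5 + ε) n ≤ Dd n ∧ Dd n ≤ gg (6 / 5 - ε) n := by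
  have hn1 : 1 ≤ n := by omega
  have hk : ∀ k, n ≤ k → 2 ≤ k ∧ 200 / ε ≤ (k : ℝ) := by
    intro k hkn
    exact ⟨le_trans hn2 hkn, le_trans hnε (by exact_mod_cast hkn)⟩
  constructor
  · -- lower bound
    have ht : Tendsto (fun m : ℕ ↦ Dd m + (gg (6 / 5 + ε) n - gg (6 / 5 + ε) m)) atTop
        (𝓝 (gg (6 / 5 + ε) n)) := by
      have := Dd_tendsto.add ((tendsto_const_nhds (x := gg (6 / 5 + ε) n)).sub
        (gg_tendsto (a := 6 / 5 + ε) (by linarith)))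
      simpa using this
    refine le_of_tendsto ht ?_
    filter_upwards [eventually_ge_atTop n] with m hm
    rw [Dd_tele n hn1 m hm]
    have hsum : gg (6 / 5 + ε) n - gg (6 / 5 + ε) m ≤ ∑ k ∈ Finset.Ico n m, cc (k + 1) := by
      rw [← gg_tele (6 / 5 + ε) n m hm]
      apply Finset.sum_le_sum
      intro k hkmem
      obtain ⟨hk2, hkε⟩ := hk k (Finset.mem_Ico.mp hkmem).1
      exact inc_lower hε hε1 hk2 hkε
    linarith
  · -- upper bound
    have ht : Tendsto (fun m : ℕ ↦ Dd m + (gg (6 / 5 - ε) n - gg (6 / 5 - ε) m)) atTop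
        (𝓝 (gg (6 / 5 - ε) n)) := by
      have := Dd_tendsto.add ((tendsto_const_nhds (x := gg (6 / 5 - ε) n)).sub
        (gg_tendsto (a := 6 / 5 - ε) (by linarith)))
      simpa using this
    refine ge_of_tendsto ht ?_
    filter_upwards [eventually_ge_atTop n] with m hm
    rw [Dd_tele n hn1 m hm]
    have hsum : ∑ k ∈ Finset.Ico n m, cc (k + 1) ≤ gg (6 / 5 - ε) n - gg (6 / 5 - ε) m := by
      rw [← gg_tele (6 / 5 - ε) n m hm]
      apply Finset.sum_le_sum
      intro k hkmem
      obtain ⟨hk2, hkε⟩ := hk k (Finset.mem_Ico.mp hkmem).1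
      exact inc_upper hε hε1 hk2 hkε
    linarith

theorem stmt6 :
    Tendsto (fun n : ℕ => 1 / (H n - (1 / 2) * Real.log (n * (n + 1)) - Real.eulerMascheroniConstant) - 6 * n * (n + 1))
      atTop (nhds (6 / 5)) := by
  rw [Metric.tendsto_atTop]
  intro ε hε
  obtain ⟨ε', hε'def⟩ : ∃ e : ℝ, e = min (ε / 2) 1 := ⟨_, rfl⟩
  have hε'pos : 0 < ε' := by rw [hε'def]; exact lt_min (by linarith) one_pos
  have hε'1 : ε' ≤ 1 := by rw [hε'def]; exact min_le_right _ _
  have hε'ε : ε' < ε := by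
    rw [hε'def]
    exact lt_of_le_of_lt (min_le_left _ _) (by linarith)
  have hev : ∀ᶠ n : ℕ in atTop, 200 / ε' ≤ (n : ℝ) :=
    (tendsto_natCast_atTop_atTop (R := ℝ)).eventually_ge_atTop (200 / ε')
  obtain ⟨N, hN⟩ := eventually_atTop.mp hev
  refine ⟨max N 2, fun n hn ↦ ?_⟩
  have hn2 : 2 ≤ n := le_trans (le_max_right _ _) hn
  have hnε : 200 / ε' ≤ (n : ℝ) := hN n (le_trans (le_max_left _ _) hn)
  obtain ⟨hlow, hup⟩ := Dd_bounds hε'pos hε'1 hn2 hnε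
  have hQa : (0 : ℝ) < 6 * (n : ℝ) ^ 2 + 6 * (n : ℝ) + (6 / 5 + ε') := by positivity
  have hQb : (0 : ℝ) < 6 * (n : ℝ) ^ 2 + 6 * (n : ℝ) + (6 / 5 - ε') := by
    have : (0 : ℝ) ≤ (n : ℝ) := Nat.cast_nonneg n
    nlinarith
  have hggA : 0 < gg (6 / 5 + ε') n := by rw [gg]; positivity
  have hggB : 0 < gg (6 / 5 - ε') n := by rw [gg]; exact one_div_pos.mpr hQb
  have hDpos : 0 < Dd n := lt_of_lt_of_le hggA hlow
  have hone1 : (6 * (n : ℝ) ^ 2 + 6 * (n : ℝ) + (6 / 5 + ε')) * gg (6 / 5 + ε') n = 1 := by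
    rw [gg, mul_one_div, div_self hQa.ne']
  have hone2 : (6 * (n : ℝ) ^ 2 + 6 * (n : ℝ) + (6 / 5 - ε')) * gg (6 / 5 - ε') n = 1 := by
    rw [gg, mul_one_div, div_self hQb.ne']
  have h1 : 1 / Dd n ≤ 6 * (n : ℝ) ^ 2 + 6 * (n : ℝ) + (6 / 5 + ε') := by
    rw [div_le_iff₀ hDpos]
    nlinarith [mul_le_mul_of_nonneg_left hlow hQa.le]
  have h2 : 6 * (n : ℝ) ^ 2 + 6 * (n : ℝ) + (6 / 5 - ε') ≤ 1 / Dd n := by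
    rw [le_div_iff₀ hDpos]
    nlinarith [mul_le_mul_of_nonneg_left hup hQb.le]
  have hDd : Dd n = H n - (1 / 2) * Real.log ((n : ℝ) * ((n : ℝ) + 1)) -
      Real.eulerMascheroniConstant := rfl
  rw [Real.dist_eq, abs_lt]
  rw [← hDd]
  constructor
  · nlinarith
  · nlinarith
end

section
/- For every real x > 0, ψ(x+1) - ln x - 1/(2x) + 1/(12x²) - 1/(120x⁴) + 1/(252x⁶) lies strictly between 0 and 1/(240x⁸). -/
noncomputable def digamma (x : ℝ) : ℝ := deriv (fun y => Real.log (Real.Gamma y)) x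

open Real Set Filter

section Digamma

lemma diffLG {x : ℝ} (hx : 0 < x) :
    DifferentiableAt ℝ (fun y => Real.log (Real.Gamma y)) x := by
  have h1 : DifferentiableAt ℝ Real.Gamma x :=
    Real.differentiableAt_Gamma (fun m => by
      intro h; have : (0:ℝ) ≤ m := Nat.cast_nonneg m; rw [h] at hx; linarith)
  exact h1.log (Real.Gamma_pos_of_pos hx).ne'

lemma hasDerivLG {x : ℝ} (hx : 0 < x) :
    HasDerivAt (fun y => Real.log (Real.Gamma y)) (digamma x) x :=
  (diffLG hx).hasDerivAt

lemma digamma_rec {x : ℝ} (hx : 0 < x) : digamma (x + 1) = digamma x + 1 / x := by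
  have h1 : HasDerivAt (fun y => Real.log (Real.Gamma (y + 1))) (digamma (x + 1)) x := by
    have := (hasDerivLG (by linarith : (0:ℝ) < x + 1)).comp x ((hasDerivAt_id x).add_const 1)
    simpa [Function.comp_def] using this
  have h2 : HasDerivAt (fun y => Real.log y + Real.log (Real.Gamma y)) (x⁻¹ + digamma x) x :=
    (Real.hasDerivAt_log hx.ne').add (hasDerivLG hx)
  have heq : (fun y => Real.log y + Real.log (Real.Gamma y))
      =ᶠ[nhds x] (fun y => Real.log (Real.Gamma (y + 1))) := by
    filter_upwards [eventually_gt_nhds hx] with y hy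
    rw [Real.Gamma_add_one hy.ne', Real.log_mul hy.ne' (Real.Gamma_pos_of_pos hy).ne']
  have h1' := h1.congr_of_eventuallyEq heq
  have := h1'.unique h2
  rw [this]; ring

lemma digamma_mono : MonotoneOn digamma (Set.Ioi 0) := by
  have h := Real.convexOn_log_Gamma.monotoneOn_deriv (fun x hx => by
    have : DifferentiableAt ℝ (fun y => Real.log (Real.Gamma y)) x := diffLG hx
    exact this)
  exact h

lemma digamma_bounds {x : ℝ} (hx : 0 < x) :
    Real.log x ≤ digamma (x + 1) ∧ digamma (x + 1) ≤ Real.log (x + 1) := by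
  have key : ∀ y : ℝ, 0 < y → ∃ c ∈ Set.Ioo y (y + 1), digamma c = Real.log y := by
    intro y hy
    have hcont : ContinuousOn (fun t => Real.log (Real.Gamma t)) (Set.Icc y (y + 1)) :=
      fun t ht => (diffLG (lt_of_lt_of_le hy ht.1)).continuousAt.continuousWithinAt
    obtain ⟨c, hc, hc2⟩ := exists_hasDerivAt_eq_slope (fun t => Real.log (Real.Gamma t))
      digamma (by linarith : y < y + 1) hcont
      (fun t ht => hasDerivLG (lt_trans hy ht.1))
    refine ⟨c, hc, ?_⟩
    rw [hc2, Real.Gamma_add_one hy.ne',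
      Real.log_mul hy.ne' (Real.Gamma_pos_of_pos hy).ne']
    ring
  obtain ⟨c, hc, hceq⟩ := key x hx
  obtain ⟨c', hc', hceq'⟩ := key (x + 1) (by linarith)
  constructor
  · rw [← hceq]
    exact digamma_mono (by simp; linarith [hc.1] : c ∈ Set.Ioi (0:ℝ))
      (by simp; linarith : (x+1) ∈ Set.Ioi (0:ℝ)) hc.2.le
  · rw [← hceq']
    exact digamma_mono (by simp; linarith : (x+1) ∈ Set.Ioi (0:ℝ))
      (by simp; linarith [hc'.1] : c' ∈ Set.Ioi (0:ℝ)) hc'.1.le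

end Digamma

section RationalHelpers

lemma hasDerivAt_one_div_pow (c a : ℝ) (k : ℕ) {x : ℝ} (hc : c ≠ 0) (h : x + a ≠ 0) :
    HasDerivAt (fun y => 1 / (c * (y + a) ^ (k + 1)))
      (-((k + 1) / (c * (x + a) ^ (k + 2)))) x := by
  have h1 : HasDerivAt (fun y : ℝ => c * (y + a) ^ (k + 1))
      (c * ((k + 1) * (x + a) ^ k)) x := by
    have := (((hasDerivAt_id x).add_const a).pow (k + 1)).const_mul c
    simpa using this
  have h2 := h1.inv (mul_ne_zero hc (pow_ne_zero _ h))
  have : -(c * ((k + 1) * (x + a) ^ k)) / (c * (x + a) ^ (k + 1)) ^ 2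
      = -((k + 1) / (c * (x + a) ^ (k + 2))) := by
    field_simp
    ring
  rw [← this]
  exact h2.congr_of_eventuallyEq (Filter.Eventually.of_forall fun y => by simp [one_div])

lemma hasDerivAt_one_div_pow' (c : ℝ) (k : ℕ) {x : ℝ} (hc : c ≠ 0) (h : x ≠ 0) :
    HasDerivAt (fun y => 1 / (c * y ^ (k + 1))) (-((k + 1) / (c * x ^ (k + 2)))) x := by
  have := hasDerivAt_one_div_pow c 0 k hc (by simpa using h)
  simpa using this

lemma hasDerivAt_log_add (a : ℝ) {x : ℝ} (h : x + a ≠ 0) :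
    HasDerivAt (fun y => Real.log (y + a)) ((x + a)⁻¹) x := by
  have := (Real.hasDerivAt_log h).comp x ((hasDerivAt_id x).add_const a)
  simpa [Function.comp_def] using this

lemma tendsto_one_div_pow (c a : ℝ) (k : ℕ) (hc : 0 < c) :
    Tendsto (fun y : ℝ => 1 / (c * (y + a) ^ (k + 1))) atTop (nhds 0) := by
  have h1 : Tendsto (fun y : ℝ => c * (y + a) ^ (k + 1)) atTop atTop := by
    apply Tendsto.const_mul_atTop hc
    exact (tendsto_pow_atTop (Nat.succ_ne_zero k)).comp
      (tendsto_atTop_add_const_right _ a tendsto_id)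
  have := h1.inv_tendsto_atTop
  apply this.congr
  intro y
  simp [one_div]

lemma tendsto_one_div_pow' (c : ℝ) (k : ℕ) (hc : 0 < c) :
    Tendsto (fun y : ℝ => 1 / (c * y ^ (k + 1))) atTop (nhds 0) := by
  have := tendsto_one_div_pow c 0 k hc
  simpa using this

lemma tendsto_log_diff : Tendsto (fun y : ℝ => Real.log (y + 1) - Real.log y) atTop (nhds 0) := by
  have h1 : Tendsto (fun y : ℝ => 1 + y⁻¹) atTop (nhds 1) := by
    have := (tendsto_const_nhds (x := (1:ℝ)) (f := atTop)).add tendsto_inv_atTop_zero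
    simpa using this
  have h2 : Tendsto (fun y : ℝ => Real.log (1 + y⁻¹)) atTop (nhds 0) := by
    have := (Real.continuousAt_log one_ne_zero).tendsto.comp h1
    simpa [Function.comp_def] using this
  apply h2.congr'
  filter_upwards [eventually_gt_atTop (0:ℝ)] with y hy
  rw [show 1 + y⁻¹ = (y + 1) / y by field_simp, Real.log_div (by linarith) hy.ne']

lemma pos_of_strictAntiOn_tendsto {f : ℝ → ℝ} (h1 : StrictAntiOn f (Set.Ioi 0))
    (h2 : Tendsto f atTop (nhds 0)) {x : ℝ} (hx : 0 < x) : 0 < f x := by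
  have hx1 : (0:ℝ) < x + 1 := by linarith
  have hle : 0 ≤ f (x + 1) := by
    apply le_of_tendsto h2
    filter_upwards [eventually_gt_atTop (x + 1)] with y hy
    exact (h1 (Set.mem_Ioi.2 hx1) (Set.mem_Ioi.2 (by linarith)) hy).le
  exact hle.trans_lt (h1 (Set.mem_Ioi.2 hx) (Set.mem_Ioi.2 hx1) (by linarith))

end RationalHelpers

section Dfun

noncomputable def dfun (x : ℝ) : ℝ :=
  Real.log (x + 1) - Real.log x - 1 / (1 * (x + 1) ^ 1) - 1 / (2 * x ^ 1)
    + 1 / (2 * (x + 1) ^ 1) + 1 / (12 * x ^ 2) - 1 / (12 * (x + 1) ^ 2)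
    - 1 / (120 * x ^ 4) + 1 / (120 * (x + 1) ^ 4)
    + 1 / (252 * x ^ 6) - 1 / (252 * (x + 1) ^ 6)

lemma hasDerivAt_dfun {x : ℝ} (hx : 0 < x) :
    HasDerivAt dfun
      (-((1/42 + x/6 + 7*x^2/15 + 3*x^3/5 + 3*x^4/10) / (x^7 * (x+1)^7))) x := by
  have hx1 : (0:ℝ) < x + 1 := by linarith
  have e1 := hasDerivAt_log_add 1 hx1.ne'
  have e2 := Real.hasDerivAt_log hx.ne'
  have e3 := hasDerivAt_one_div_pow 1 1 0 one_ne_zero hx1.ne'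
  have e4 := hasDerivAt_one_div_pow' 2 0 two_ne_zero hx.ne'
  have e5 := hasDerivAt_one_div_pow 2 1 0 two_ne_zero hx1.ne'
  have e6 := hasDerivAt_one_div_pow' 12 1 (by norm_num) hx.ne'
  have e7 := hasDerivAt_one_div_pow 12 1 1 (by norm_num) hx1.ne'
  have e8 := hasDerivAt_one_div_pow' 120 3 (by norm_num) hx.ne'
  have e9 := hasDerivAt_one_div_pow 120 1 3 (by norm_num) hx1.ne'
  have e10 := hasDerivAt_one_div_pow' 252 5 (by norm_num) hx.ne'
  have e11 := hasDerivAt_one_div_pow 252 1 5 (by norm_num) hx1.ne'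
  have H := ((((((((((e1.sub e2).sub e3).sub e4).add e5).add e6).sub e7).sub e8).add
    e9).add e10).sub e11)
  refine H.congr_deriv ?_
  field_simp
  ring

lemma tendsto_dfun : Tendsto dfun atTop (nhds 0) := by
  have e1 := tendsto_log_diff
  have e3 := tendsto_one_div_pow 1 1 0 one_pos
  have e4 := tendsto_one_div_pow' 2 0 two_pos
  have e5 := tendsto_one_div_pow 2 1 0 two_pos
  have e6 := tendsto_one_div_pow' 12 1 (by norm_num)
  have e7 := tendsto_one_div_pow 12 1 1 (by norm_num)
  have e8 := tendsto_one_div_pow' 120 3 (by norm_num)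
  have e9 := tendsto_one_div_pow 120 1 3 (by norm_num)
  have e10 := tendsto_one_div_pow' 252 5 (by norm_num)
  have e11 := tendsto_one_div_pow 252 1 5 (by norm_num)
  have H := (((((((((e1.sub e3).sub e4).add e5).add e6).sub e7).sub e8).add
    e9).add e10).sub e11)
  have : dfun = fun y => (Real.log (y + 1) - Real.log y) - 1 / (1 * (y + 1) ^ 1)
      - 1 / (2 * y ^ 1) + 1 / (2 * (y + 1) ^ 1) + 1 / (12 * y ^ 2) - 1 / (12 * (y + 1) ^ 2)
      - 1 / (120 * y ^ 4) + 1 / (120 * (y + 1) ^ 4)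
      + 1 / (252 * y ^ 6) - 1 / (252 * (y + 1) ^ 6) := by
    funext y; simp [dfun]
  rw [this]
  simpa using H

lemma strictAntiOn_dfun : StrictAntiOn dfun (Set.Ioi 0) := by
  apply strictAntiOn_of_deriv_neg (convex_Ioi 0)
  · exact fun y hy => (hasDerivAt_dfun hy).differentiableAt.continuousAt.continuousWithinAt
  · intro y hy
    rw [interior_Ioi] at hy
    rw [(hasDerivAt_dfun hy).deriv]
    have hy' : (0:ℝ) < y := hy
    have hnum : 0 < 1/42 + y/6 + 7*y^2/15 + 3*y^3/5 + 3*y^4/10 := by positivity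
    have hden : 0 < y^7 * (y+1)^7 := by positivity
    have := div_pos hnum hden
    linarith

lemma dfun_pos {x : ℝ} (hx : 0 < x) : 0 < dfun x :=
  pos_of_strictAntiOn_tendsto strictAntiOn_dfun tendsto_dfun hx

noncomputable def hfun (x : ℝ) : ℝ :=
  1 / (240 * x ^ 8) - 1 / (240 * (x + 1) ^ 8) - dfun x

lemma hasDerivAt_hfun {x : ℝ} (hx : 0 < x) :
    HasDerivAt hfun
      (-((1/30 + 3*x/10 + 247*x^2/210 + 181*x^3/70 + 709*x^4/210 + 5*x^5/2 + 5*x^6/6)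
        / (x^9 * (x+1)^9))) x := by
  have hx1 : (0:ℝ) < x + 1 := by linarith
  have e1 := hasDerivAt_one_div_pow' 240 7 (by norm_num) hx.ne'
  have e2 := hasDerivAt_one_div_pow 240 1 7 (by norm_num) hx1.ne'
  have H := (e1.sub e2).sub (hasDerivAt_dfun hx)
  refine H.congr_deriv ?_
  field_simp
  ring

lemma tendsto_hfun : Tendsto hfun atTop (nhds 0) := by
  have e1 := tendsto_one_div_pow' 240 7 (by norm_num : (0:ℝ) < 240)
  have e2 := tendsto_one_div_pow 240 1 7 (by norm_num : (0:ℝ) < 240)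
  have H := (e1.sub e2).sub tendsto_dfun
  have : hfun = fun y => 1 / (240 * y ^ 8) - 1 / (240 * (y + 1) ^ 8) - dfun y := rfl
  rw [this]
  simpa using H

lemma strictAntiOn_hfun : StrictAntiOn hfun (Set.Ioi 0) := by
  apply strictAntiOn_of_deriv_neg (convex_Ioi 0)
  · exact fun y hy => (hasDerivAt_hfun hy).differentiableAt.continuousAt.continuousWithinAt
  · intro y hy
    rw [interior_Ioi] at hy
    rw [(hasDerivAt_hfun hy).deriv]
    have hy' : (0:ℝ) < y := hy
    have hnum : 0 < 1/30 + 3*y/10 + 247*y^2/210 + 181*y^3/70 + 709*y^4/210 + 5*y^5/2 + 5*y^6/6 :=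
      by positivity
    have hden : 0 < y^9 * (y+1)^9 := by positivity
    have := div_pos hnum hden
    linarith

lemma hfun_pos {x : ℝ} (hx : 0 < x) : 0 < hfun x :=
  pos_of_strictAntiOn_tendsto strictAntiOn_hfun tendsto_hfun hx

end Dfun

section Assembly

noncomputable def Ffun (x : ℝ) : ℝ :=
  digamma (x + 1) - Real.log x - 1 / (2 * x) + 1 / (12 * x ^ 2) - 1 / (120 * x ^ 4)
    + 1 / (252 * x ^ 6)

lemma Ffun_step {x : ℝ} (hx : 0 < x) : Ffun x = dfun x + Ffun (x + 1) := by
  have hx1 : (0:ℝ) < x + 1 := by linarith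
  have hrec : digamma (x + 1 + 1) = digamma (x + 1) + 1 / (x + 1) := digamma_rec hx1
  simp only [Ffun, dfun, hrec]
  field_simp
  ring

lemma tendsto_Ffun : Tendsto Ffun atTop (nhds 0) := by
  have hdig : Tendsto (fun y : ℝ => digamma (y + 1) - Real.log y) atTop (nhds 0) := by
    apply tendsto_of_tendsto_of_tendsto_of_le_of_le' tendsto_const_nhds tendsto_log_diff
    · filter_upwards [eventually_gt_atTop (0:ℝ)] with y hy
      linarith [(digamma_bounds hy).1]
    · filter_upwards [eventually_gt_atTop (0:ℝ)] with y hy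
      linarith [(digamma_bounds hy).2]
  have e4 := tendsto_one_div_pow' 2 0 two_pos
  have e6 := tendsto_one_div_pow' 12 1 (by norm_num : (0:ℝ) < 12)
  have e8 := tendsto_one_div_pow' 120 3 (by norm_num : (0:ℝ) < 120)
  have e10 := tendsto_one_div_pow' 252 5 (by norm_num : (0:ℝ) < 252)
  have H := (((hdig.sub e4).add e6).sub e8).add e10
  have : Ffun = fun y => (digamma (y + 1) - Real.log y) - 1 / (2 * y ^ 1)
      + 1 / (12 * y ^ 2) - 1 / (120 * y ^ 4) + 1 / (252 * y ^ 6) := by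
    funext y; simp [Ffun]
  rw [this]
  simpa using H

lemma tendsto_Ffun_seq (x : ℝ) : Tendsto (fun n : ℕ => Ffun (x + n)) atTop (nhds 0) := by
  apply tendsto_Ffun.comp
  exact tendsto_atTop_add_const_left _ x tendsto_natCast_atTop_atTop

lemma Ffun_ge (x : ℝ) (hx : 0 < x) : ∀ n : ℕ, Ffun (x + n) ≤ Ffun x := by
  intro n
  induction n with
  | zero => simp
  | succ n ih =>
    have hxn : (0:ℝ) < x + n := by positivity
    have := Ffun_step hxn
    have hd := dfun_pos hxn
    push_cast
    have : Ffun (x + n + 1) ≤ Ffun (x + n) := by linarith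
    calc Ffun (x + (n + 1)) = Ffun (x + n + 1) := by ring_nf
      _ ≤ Ffun (x + n) := this
      _ ≤ Ffun x := ih

lemma Ffun_le (x : ℝ) (hx : 0 < x) :
    ∀ n : ℕ, Ffun x ≤ Ffun (x + n) + (1 / (240 * x ^ 8) - 1 / (240 * (x + n) ^ 8)) := by
  intro n
  induction n with
  | zero => simp
  | succ n ih =>
    have hxn : (0:ℝ) < x + n := by positivity
    have hstep := Ffun_step hxn
    have hh := hfun_pos hxn
    simp only [hfun] at hh
    push_cast
    have key : Ffun (x + n) ≤ Ffun (x + n + 1)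
        + (1 / (240 * (x + n) ^ 8) - 1 / (240 * (x + n + 1) ^ 8)) := by linarith
    calc Ffun x ≤ Ffun (x + n) + (1 / (240 * x ^ 8) - 1 / (240 * (x + n) ^ 8)) := ih
      _ ≤ Ffun (x + n + 1) + (1 / (240 * x ^ 8) - 1 / (240 * (x + n + 1) ^ 8)) := by linarith
      _ = Ffun (x + (n + 1)) + (1 / (240 * x ^ 8) - 1 / (240 * (x + (n + 1)) ^ 8)) := by
        ring_nf

lemma Ffun_nonneg {x : ℝ} (hx : 0 < x) : 0 ≤ Ffun x :=
  le_of_tendsto (tendsto_Ffun_seq x) (Filter.Eventually.of_forall (Ffun_ge x hx))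

lemma Ffun_le_g {x : ℝ} (hx : 0 < x) : Ffun x ≤ 1 / (240 * x ^ 8) := by
  have hg : Tendsto (fun n : ℕ => 1 / (240 * (x + n) ^ 8)) atTop (nhds 0) := by
    have := (tendsto_one_div_pow' 240 7 (by norm_num : (0:ℝ) < 240)).comp
      (tendsto_atTop_add_const_left _ x tendsto_natCast_atTop_atTop)
    simpa [Function.comp_def] using this
  have hRHS : Tendsto (fun n : ℕ => Ffun (x + n) + (1 / (240 * x ^ 8)
      - 1 / (240 * (x + n) ^ 8))) atTop (nhds (1 / (240 * x ^ 8))) := by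
    have := (tendsto_Ffun_seq x).add ((tendsto_const_nhds (x := 1 / (240 * x ^ 8))).sub hg)
    simpa using this
  exact ge_of_tendsto hRHS (Filter.Eventually.of_forall (Ffun_le x hx))

end Assembly

theorem stmt8 (x : ℝ) (hx : 0 < x) :
    0 < digamma (x + 1) - Real.log x - 1 / (2 * x) + 1 / (12 * x ^ 2) - 1 / (120 * x ^ 4)
        + 1 / (252 * x ^ 6) ∧
    digamma (x + 1) - Real.log x - 1 / (2 * x) + 1 / (12 * x ^ 2) - 1 / (120 * x ^ 4)
        + 1 / (252 * x ^ 6) < 1 / (240 * x ^ 8) := by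
  have hx1 : (0:ℝ) < x + 1 := by linarith
  have hstep := Ffun_step hx
  have hF : Ffun x = digamma (x + 1) - Real.log x - 1 / (2 * x) + 1 / (12 * x ^ 2)
      - 1 / (120 * x ^ 4) + 1 / (252 * x ^ 6) := rfl
  constructor
  · rw [← hF]
    have := dfun_pos hx
    have := Ffun_nonneg hx1
    linarith
  · rw [← hF]
    have hh := hfun_pos hx
    simp only [hfun] at hh
    have := Ffun_le_g hx1
    linarith
end

section
/- For every real x > 0, 1/x - 1/(2x²) + 1/(6x³) - 1/(30x⁵) + 1/(42x⁷) - ψ'(x+1) lies strictly between 0 and 1/(30x⁹). -/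
open Filter Finset Real Topology

noncomputable def trigamma (x : ℝ) : ℝ := deriv digamma x

lemma base_summable : Summable (fun k : ℕ => 1/((k:ℝ)+1)^2) := by
  have h : Summable (fun n : ℕ => 1 / (n:ℝ) ^ 2) := summable_one_div_nat_pow.mpr one_lt_two
  have := (summable_nat_add_iff 1).mpr h
  simpa using this

lemma inv_sq_summable {a : ℝ} (ha : 0 < a) : Summable (fun k : ℕ => 1/(a+(k:ℝ))^2) := by
  set c := min a 1 with hc
  have hc0 : 0 < c := lt_min ha one_pos
  have hc1 : c ≤ 1 := min_le_right _ _
  have hca : c ≤ a := min_le_left _ _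
  refine Summable.of_nonneg_of_le (fun k => by positivity) (fun k => ?_)
    (base_summable.mul_left (1/c^2))
  have hk : c * ((k:ℝ)+1) ≤ a + k := by
    have : c * k ≤ 1 * k := by
      apply mul_le_mul_of_nonneg_right hc1 (by positivity)
    nlinarith
  have h1 : 0 < c * ((k:ℝ)+1) := by positivity
  have := one_div_le_one_div_of_le h1 hk
  calc 1/(a+(k:ℝ))^2 ≤ 1/(c*((k:ℝ)+1))^2 := by
        apply one_div_le_one_div_of_le (by positivity)
        apply pow_le_pow_left₀ h1.le hk
      _ = 1/c^2 * (1/((k:ℝ)+1)^2) := by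
        rw [mul_pow, one_div_mul_one_div]

noncomputable def F (y : ℝ) : ℝ :=
  1 / y - 1 / (2 * y ^ 2) + 1 / (6 * y ^ 3) - 1 / (30 * y ^ 5) + 1 / (42 * y ^ 7)

noncomputable def G (y : ℝ) : ℝ := 1 / (30 * y ^ 9)

lemma d_pos {y : ℝ} (hy : 0 < y) : 0 < F y - F (y+1) - 1/(y+1)^2 := by
  have hy1 : (0:ℝ) < y + 1 := by linarith
  have key : F y - F (y+1) - 1/(y+1)^2
      = (3/10*y^4 + 3/5*y^3 + 7/15*y^2 + 1/6*y + 1/42) / (y^7 * (y+1)^7) := by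
    unfold F
    field_simp
    ring
  rw [key]; positivity

lemma d_lt {y : ℝ} (hy : 0 < y) :
    F y - F (y+1) - 1/(y+1)^2 < G y - G (y+1) := by
  have hy1 : (0:ℝ) < y + 1 := by linarith
  have key : (G y - G (y+1)) - (F y - F (y+1) - 1/(y+1)^2)
      = (5/6*y^6 + 5/2*y^5 + 709/210*y^4 + 181/70*y^3 + 247/210*y^2 + 3/10*y + 1/30)
        / (y^9 * (y+1)^9) := by
    unfold F G
    field_simp
    ring
  nlinarith [key, show (0:ℝ) < (5/6*y^6 + 5/2*y^5 + 709/210*y^4 + 181/70*y^3 + 247/210*y^2 + 3/10*y + 1/30) / (y^9 * (y+1)^9) by positivity]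




noncomputable def psi (y : ℝ) : ℝ :=
  -Real.eulerMascheroniConstant - 1/y + ∑' k : ℕ, (1/((k:ℝ)+1) - 1/(y+(k:ℝ)+1))

lemma g_term_eq {t : ℝ} (ht : 0 < t) (k : ℕ) :
    1/((k:ℝ)+1) - 1/(t+(k:ℝ)+1) = t / (((k:ℝ)+1) * (t+(k:ℝ)+1)) := by
  have h1 : ((k:ℝ)+1) ≠ 0 := by positivity
  have h2 : (t+(k:ℝ)+1) ≠ 0 := by positivity
  field_simp
  ring

lemma g_nonneg {t : ℝ} (ht : 0 < t) (k : ℕ) :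
    0 ≤ 1/((k:ℝ)+1) - 1/(t+(k:ℝ)+1) := by
  rw [g_term_eq ht k]; positivity

lemma g_le {t : ℝ} (ht : 0 < t) (k : ℕ) :
    1/((k:ℝ)+1) - 1/(t+(k:ℝ)+1) ≤ t * (1/((k:ℝ)+1)^2) := by
  rw [g_term_eq ht k]
  have hk : (0:ℝ) < (k:ℝ)+1 := by positivity
  calc t / (((k:ℝ)+1) * (t+(k:ℝ)+1)) ≤ t / (((k:ℝ)+1) * ((k:ℝ)+1)) := by
        apply div_le_div_of_nonneg_left ht.le (by positivity) (by nlinarith)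
    _ = t * (1/((k:ℝ)+1)^2) := by rw [pow_two]; ring

lemma g_summable {t : ℝ} (ht : 0 < t) :
    Summable (fun k : ℕ => 1/((k:ℝ)+1) - 1/(t+(k:ℝ)+1)) :=
  Summable.of_nonneg_of_le (g_nonneg ht) (g_le ht) (base_summable.mul_left t)

lemma tendsto_log_sub_harmonic :
    Tendsto (fun n : ℕ => Real.log ((n:ℝ)+1) - ∑ k ∈ Finset.range (n+1), 1/((k:ℝ)+1)) atTop
      (𝓝 (-Real.eulerMascheroniConstant)) := by
  have hh : ∀ n : ℕ, ((harmonic n : ℚ) : ℝ) = ∑ k ∈ Finset.range n, 1/((k:ℝ)+1) := by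
    intro n
    rw [harmonic]
    push_cast
    simp [one_div]
  have h1 := Real.tendsto_eulerMascheroniSeq.comp (tendsto_add_atTop_nat 1)
  have h3 : Tendsto (fun n : ℕ => Real.log ((n:ℝ)+2) - Real.log ((n:ℝ)+1)) atTop (𝓝 0) := by
    have key : ∀ n : ℕ, Real.log ((n:ℝ)+2) - Real.log ((n:ℝ)+1)
        = Real.log (1 + 1/((n:ℝ)+1)) := by
      intro n
      rw [← Real.log_div (by positivity) (by positivity)]
      congr 1
      field_simp
      ring
    simp_rw [key]
    have hlim : Tendsto (fun n : ℕ => 1 + 1/((n:ℝ)+1)) atTop (𝓝 1) := by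
      have := tendsto_one_div_add_atTop_nhds_zero_nat (𝕜 := ℝ)
      simpa using tendsto_const_nhds.add this
    have hcont := (Real.continuousAt_log one_ne_zero).tendsto
    have := hcont.comp hlim
    simpa [Function.comp_def] using this
  have key2 : (fun n : ℕ => Real.log ((n:ℝ)+1) - ∑ k ∈ Finset.range (n+1), 1/((k:ℝ)+1))
      = fun n : ℕ => -(Real.eulerMascheroniSeq ∘ (· + 1)) n
        - (Real.log ((n:ℝ)+2) - Real.log ((n:ℝ)+1)) := by
    funext n
    simp only [Function.comp_apply, Real.eulerMascheroniSeq]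
    rw [hh]
    push_cast
    simp only [one_div]
    ring_nf
  rw [key2]
  have hfinal := (h1.neg).sub h3
  simpa only [sub_zero] using hfinal

lemma hasDerivAt_logGamma {y : ℝ} (hy : 0 < y) :
    HasDerivAt (fun t => Real.log (Real.Gamma t)) (psi y) y := by
  set a := y/2 with ha_def
  set b := y+1 with hb_def
  have ha : 0 < a := by positivity
  have hyM : y ∈ Set.Ioo a b := ⟨by simp [ha_def]; linarith, by simp [hb_def]⟩
  apply hasDerivAt_of_tendstoUniformlyOn (l := atTop) (isOpen_Ioo (a := a) (b := b))
    (f' := fun (n:ℕ) (t:ℝ) => Real.log ((n:ℝ)+1) - ∑ k ∈ Finset.range (n+2), 1/(t+(k:ℝ)))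
    (f := fun (n:ℕ) (t:ℝ) => t * Real.log ((n:ℝ)+1) + Real.log ((Nat.factorial (n+1) : ℕ) : ℝ)
      - ∑ k ∈ Finset.range (n+2), Real.log (t+(k:ℝ)))
    (hf' := ?_) (hf := ?_) (hfg := ?_) (hx := hyM)
  · -- uniform convergence of derivatives
    have hB : TendstoUniformlyOn
        (fun (n:ℕ) (t:ℝ) => ∑ k ∈ Finset.range (n+1), (1/((k:ℝ)+1) - 1/(t+(k:ℝ)+1)))
        (fun t => ∑' k : ℕ, (1/((k:ℝ)+1) - 1/(t+(k:ℝ)+1))) atTop (Set.Ioo a b) := by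
      have base := tendstoUniformlyOn_tsum_nat (f := fun (k:ℕ) (t:ℝ) => 1/((k:ℝ)+1) - 1/(t+(k:ℝ)+1))
        (u := fun k => b * (1/((k:ℝ)+1)^2)) (base_summable.mul_left b) (s := Set.Ioo a b) ?_
      · exact fun u hu => (tendsto_add_atTop_nat 1).eventually (base u hu)
      · intro k t htm
        have ht : 0 < t := lt_trans ha htm.1
        rw [Real.norm_eq_abs, abs_of_nonneg (g_nonneg ht k)]
        calc 1/((k:ℝ)+1) - 1/(t+(k:ℝ)+1) ≤ t * (1/((k:ℝ)+1)^2) := g_le ht k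
          _ ≤ b * (1/((k:ℝ)+1)^2) := by
              apply mul_le_mul_of_nonneg_right (le_of_lt htm.2) (by positivity)
    have hA : TendstoUniformlyOn
        (fun (n:ℕ) (t:ℝ) => (Real.log ((n:ℝ)+1) - ∑ k ∈ Finset.range (n+1), 1/((k:ℝ)+1)) - 1/t)
        (fun t => -Real.eulerMascheroniConstant - 1/t) atTop (Set.Ioo a b) := by
      rw [Metric.tendstoUniformlyOn_iff]
      intro ε hε
      have := (Metric.tendsto_nhds.mp tendsto_log_sub_harmonic) ε hε
      filter_upwards [this] with n hn t _
      have : dist (-Real.eulerMascheroniConstant - 1/t)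
          ((Real.log ((n:ℝ)+1) - ∑ k ∈ Finset.range (n+1), 1/((k:ℝ)+1)) - 1/t)
          = dist (Real.log ((n:ℝ)+1) - ∑ k ∈ Finset.range (n+1), 1/((k:ℝ)+1))
            (-Real.eulerMascheroniConstant) := by
        rw [Real.dist_eq, Real.dist_eq]
        rw [abs_sub_comm]
        congr 1
        ring
      rw [this]
      exact hn
    have hAB := hA.add hB
    have hC := hAB.congr (F' := fun (n:ℕ) (t:ℝ) =>
        Real.log ((n:ℝ)+1) - ∑ k ∈ Finset.range (n+2), 1/(t+(k:ℝ))) ?_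
    · exact hC.congr_right fun t ht => by simp only [Pi.add_apply, psi]
    apply Eventually.of_forall
    intro n t htm
    simp only [Pi.add_apply]
    have hsplit : ∑ k ∈ Finset.range (n+2), 1/(t+(k:ℝ))
        = (∑ k ∈ Finset.range (n+1), 1/(t+(k:ℝ)+1)) + 1/t := by
      rw [Finset.sum_range_succ' (fun k => 1/(t+(k:ℝ))) (n+1)]
      push_cast
      simp [add_assoc]
    rw [hsplit, Finset.sum_sub_distrib]
    ring
  · -- HasDerivAt of each f n
    apply Eventually.of_forall
    intro n t htm
    have ht : 0 < t := lt_trans ha htm.1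
    have hsum : HasDerivAt (fun t => ∑ k ∈ Finset.range (n+2), Real.log (t+(k:ℝ)))
        (∑ k ∈ Finset.range (n+2), 1/(t+(k:ℝ))) t := by
      apply HasDerivAt.fun_sum
      intro k _
      have h1 : HasDerivAt (fun t:ℝ => t + (k:ℝ)) 1 t := (hasDerivAt_id t).add_const _
      have h2 := h1.log (by positivity : t + (k:ℝ) ≠ 0)
      simpa using h2
    have hlin : HasDerivAt (fun t:ℝ => t * Real.log ((n:ℝ)+1) + Real.log ((Nat.factorial (n+1) : ℕ) : ℝ))
        (Real.log ((n:ℝ)+1)) t := (hasDerivAt_mul_const _).add_const _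
    exact hlin.sub hsum
  · -- pointwise convergence to log Gamma
    intro t htm
    have ht : 0 < t := lt_trans ha htm.1
    have key : ∀ n : ℕ, t * Real.log ((n:ℝ)+1) + Real.log ((Nat.factorial (n+1) : ℕ) : ℝ)
        - ∑ k ∈ Finset.range (n+2), Real.log (t+(k:ℝ))
        = Real.log (Real.GammaSeq t (n+1)) := by
      intro n
      rw [Real.GammaSeq]
      have hn1 : (0:ℝ) < ((n+1 : ℕ) : ℝ) := by positivity
      have hfac : (0:ℝ) < ((Nat.factorial (n+1) : ℕ) : ℝ) := by positivity
      have hprod : ∀ j ∈ Finset.range (n+1+1), t + (j:ℝ) ≠ 0 := by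
        intro j _
        positivity
      have hprodpos : (0:ℝ) < ∏ j ∈ Finset.range (n+1+1), (t + (j:ℝ)) := by
        apply Finset.prod_pos
        intro j _
        positivity
      rw [Real.log_div (by positivity) hprodpos.ne', Real.log_mul (by positivity) hfac.ne',
        Real.log_rpow hn1, Real.log_prod hprod]
      push_cast
      ring
    simp_rw [key]
    have hG : Tendsto (fun n : ℕ => Real.GammaSeq t (n+1)) atTop (𝓝 (Real.Gamma t)) :=
      (Real.GammaSeq_tendsto_Gamma t).comp (tendsto_add_atTop_nat 1)
    exact ((Real.continuousAt_log (Real.Gamma_pos_of_pos ht).ne').tendsto).comp hG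

lemma digamma_eq {y : ℝ} (hy : 0 < y) : digamma y = psi y :=
  (hasDerivAt_logGamma hy).deriv

lemma hasDerivAt_psi {y : ℝ} (hy : 0 < y) :
    HasDerivAt psi (∑' k : ℕ, 1/(y+(k:ℝ))^2) y := by
  set a := y/2 with ha_def
  set b := y+1 with hb_def
  have ha : 0 < a := by positivity
  have hyM : y ∈ Set.Ioo a b := ⟨by simp [ha_def]; linarith, by simp [hb_def]⟩
  have hS : HasDerivAt (fun t => ∑' k : ℕ, (1/((k:ℝ)+1) - 1/(t+(k:ℝ)+1)))
      (∑' k : ℕ, 1/(y+(k:ℝ)+1)^2) y := by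
    apply hasDerivAt_of_tendstoUniformlyOn (l := atTop) (isOpen_Ioo (a := a) (b := b))
      (f' := fun (n:ℕ) (t:ℝ) => ∑ k ∈ Finset.range n, 1/(t+(k:ℝ)+1)^2)
      (f := fun (n:ℕ) (t:ℝ) => ∑ k ∈ Finset.range n, (1/((k:ℝ)+1) - 1/(t+(k:ℝ)+1)))
      (hf' := ?_) (hf := ?_) (hfg := ?_) (hx := hyM)
    · -- uniform convergence
      have base := tendstoUniformlyOn_tsum_nat (f := fun (k:ℕ) (t:ℝ) => 1/(t+(k:ℝ)+1)^2)
        (u := fun k => 1/((a+1)+(k:ℝ))^2) (inv_sq_summable (by positivity)) (s := Set.Ioo a b) ?_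
      · exact base
      · intro k t htm
        have ht : a < t := htm.1
        have h1 : (0:ℝ) < (a+1)+(k:ℝ) := by positivity
        rw [Real.norm_eq_abs, abs_of_nonneg (by positivity)]
        apply one_div_le_one_div_of_le (by positivity)
        apply pow_le_pow_left₀ h1.le
        linarith
    · apply Eventually.of_forall
      intro n t htm
      have ht : 0 < t := lt_trans ha htm.1
      apply HasDerivAt.fun_sum
      intro k _
      have h1 : HasDerivAt (fun t:ℝ => t + ((k:ℝ)+1)) 1 t := (hasDerivAt_id t).add_const _
      have hne : t + ((k:ℝ)+1) ≠ 0 := by positivity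
      have h2 := h1.inv hne
      have h3 := (hasDerivAt_const t (1/((k:ℝ)+1))).sub h2
      convert h3 using 1
      · funext u
        simp [one_div, add_assoc]
      · rw [add_assoc]
        field_simp
        ring
    · intro t htm
      have ht : 0 < t := lt_trans ha htm.1
      exact (g_summable ht).hasSum.tendsto_sum_nat
  have h1 : HasDerivAt (fun t:ℝ => -Real.eulerMascheroniConstant - 1/t) (1/y^2) y := by
    have := (hasDerivAt_inv hy.ne').const_sub (-Real.eulerMascheroniConstant)
    have h2 : HasDerivAt (fun t:ℝ => -Real.eulerMascheroniConstant - t⁻¹) ((y^2)⁻¹) y := by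
      simpa using this
    convert h2 using 1
    · funext u; rw [one_div]
    · rw [one_div]
  have hsum := h1.add hS
  have hval : 1/y^2 + ∑' k : ℕ, 1/(y+(k:ℝ)+1)^2 = ∑' k : ℕ, 1/(y+(k:ℝ))^2 := by
    rw [Summable.tsum_eq_zero_add (inv_sq_summable hy)]
    push_cast
    simp [add_assoc]
  rw [hval] at hsum
  exact hsum

lemma trigamma_eq {y : ℝ} (hy : 0 < y) : trigamma y = ∑' k : ℕ, 1/(y+(k:ℝ))^2 := by
  have heq : digamma =ᶠ[nhds y] psi := by
    filter_upwards [isOpen_Ioi.mem_nhds (Set.mem_Ioi.mpr hy)] with t ht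
    exact digamma_eq ht
  rw [trigamma, heq.deriv_eq, (hasDerivAt_psi hy).deriv]





lemma tendsto_base {x : ℝ} (hx : 0 < x) (p : ℕ) (hp : p ≠ 0) :
    Tendsto (fun n : ℕ => ((x + (n:ℝ)) ^ p)⁻¹) atTop (𝓝 0) := by
  have hb : Tendsto (fun n : ℕ => x + (n:ℝ)) atTop atTop :=
    tendsto_atTop_add_const_left _ x tendsto_natCast_atTop_atTop
  exact ((tendsto_pow_atTop hp).comp hb).inv_tendsto_atTop

lemma tendsto_F_zero {x : ℝ} (hx : 0 < x) :
    Tendsto (fun n : ℕ => F (x + n)) atTop (𝓝 0) := by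
  have h1 := tendsto_base hx 1 one_ne_zero
  have h2 := tendsto_base hx 2 two_ne_zero
  have h3 := tendsto_base hx 3 (by norm_num)
  have h5 := tendsto_base hx 5 (by norm_num)
  have h7 := tendsto_base hx 7 (by norm_num)
  have := ((((h1.sub (h2.const_mul 2⁻¹)).add (h3.const_mul 6⁻¹)).sub
      (h5.const_mul 30⁻¹)).add (h7.const_mul 42⁻¹))
  simp only [mul_zero, sub_zero, add_zero, zero_sub, zero_add, neg_zero] at this
  convert this using 2 with n
  unfold F
  rw [pow_one]
  field_simp

lemma tendsto_G_zero {x : ℝ} (hx : 0 < x) :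
    Tendsto (fun n : ℕ => G (x + n)) atTop (𝓝 0) := by
  have h9 := tendsto_base hx 9 (by norm_num)
  have := h9.const_mul 30⁻¹
  simp only [mul_zero] at this
  convert this using 2 with n
  unfold G
  field_simp

lemma hasSum_F {x : ℝ} (hx : 0 < x) :
    HasSum (fun n : ℕ => F (x + n) - F (x + n + 1)) (F x) := by
  have hnn : ∀ n : ℕ, 0 ≤ F (x + n) - F (x + n + 1) := by
    intro n
    have hy : (0:ℝ) < x + n := by positivity
    have := d_pos hy
    have h2 : (0:ℝ) < 1/(x + n + 1)^2 := by positivity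
    linarith
  rw [hasSum_iff_tendsto_nat_of_nonneg hnn]
  have key : ∀ n : ℕ, ∑ i ∈ range n, (F (x + i) - F (x + i + 1)) = F x - F (x + n) := by
    intro n
    have := Finset.sum_range_sub' (fun i : ℕ => F (x + i)) n
    simp only [Nat.cast_zero, add_zero, Nat.cast_add, Nat.cast_one] at this
    rw [← this]
    apply Finset.sum_congr rfl
    intro i _
    congr 2
    push_cast
    ring
  simp only [key]
  have := (tendsto_F_zero hx).const_sub (F x)
  simpa using this

lemma hasSum_G {x : ℝ} (hx : 0 < x) :
    HasSum (fun n : ℕ => G (x + n) - G (x + n + 1)) (G x) := by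
  have hnn : ∀ n : ℕ, 0 ≤ G (x + n) - G (x + n + 1) := by
    intro n
    have hy : (0:ℝ) < x + n := by positivity
    unfold G
    have : (x+n)^9 ≤ (x+n+1)^9 := by
      apply pow_le_pow_left₀ hy.le; linarith
    rw [sub_nonneg]
    apply one_div_le_one_div_of_le (by positivity)
    nlinarith
  rw [hasSum_iff_tendsto_nat_of_nonneg hnn]
  have key : ∀ n : ℕ, ∑ i ∈ range n, (G (x + i) - G (x + i + 1)) = G x - G (x + n) := by
    intro n
    have := Finset.sum_range_sub' (fun i : ℕ => G (x + i)) n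
    simp only [Nat.cast_zero, add_zero, Nat.cast_add, Nat.cast_one] at this
    rw [← this]
    apply Finset.sum_congr rfl
    intro i _
    congr 2
    push_cast
    ring
  simp only [key]
  have := (tendsto_G_zero hx).const_sub (G x)
  simpa using this

theorem stmt9 (x : ℝ) (hx : 0 < x) :
    0 < 1 / x - 1 / (2 * x ^ 2) + 1 / (6 * x ^ 3) - 1 / (30 * x ^ 5) + 1 / (42 * x ^ 7)
        - trigamma (x + 1) ∧
    1 / x - 1 / (2 * x ^ 2) + 1 / (6 * x ^ 3) - 1 / (30 * x ^ 5) + 1 / (42 * x ^ 7)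
        - trigamma (x + 1) < 1 / (30 * x ^ 9) := by
  have hx1 : (0:ℝ) < x + 1 := by linarith
  have hT : HasSum (fun n : ℕ => 1/(x + n + 1)^2) (trigamma (x+1)) := by
    have h := (inv_sq_summable hx1).hasSum
    rw [← trigamma_eq hx1] at h
    have : (fun n : ℕ => 1/(x + n + 1)^2) = (fun k : ℕ => 1/((x+1) + (k:ℝ))^2) := by
      funext n; ring_nf
    rw [this]
    exact h
  have hD : HasSum (fun n : ℕ => F (x + n) - F (x + n + 1) - 1/(x + n + 1)^2)
      (F x - trigamma (x+1)) := (hasSum_F hx).sub hT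
  have hpos : ∀ n : ℕ, 0 < F (x + n) - F (x + n + 1) - 1/(x + n + 1)^2 := fun n =>
    d_pos (by positivity : (0:ℝ) < x + n)
  have hlt : ∀ n : ℕ, F (x + n) - F (x + n + 1) - 1/(x + n + 1)^2
      < G (x + n) - G (x + n + 1) := fun n => d_lt (by positivity : (0:ℝ) < x + n)
  constructor
  · show (0:ℝ) < F x - trigamma (x+1)
    rw [← hD.tsum_eq]
    exact Summable.tsum_pos hD.summable (fun i => (hpos i).le) 0 (hpos 0)
  · show F x - trigamma (x+1) < G x
    exact hasSum_lt (fun i => (hlt i).le) (hlt 0) hD (hasSum_G hx)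
end

section
/- For every real x > 0, 1/x² - 1/(x(x+1)) - 1/(3x³) + 1/(15x⁵) - 1/(18x⁷) < 1/x + 1/(x+1) - 2ψ'(x+1) < 1/x² - 1/(x(x+1)) - 1/(3x³) + 1/(15x⁵). -/
open Real Filter Topology Finset

namespace Stmt11Aux

lemma summable_base : Summable (fun n : ℕ => 1/((n:ℝ)+1)^2) := by
  have h := summable_one_div_nat_pow.mpr (le_refl 2)
  have := (summable_nat_add_iff (f := fun n : ℕ => 1/(n:ℝ)^2) 1).mpr h
  exact this.congr (fun n => by push_cast; ring)

noncomputable def F (n : ℕ) (y : ℝ) : ℝ := y/((n:ℝ)+1) - Real.log (1 + y/((n:ℝ)+1))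
noncomputable def G (n : ℕ) (y : ℝ) : ℝ := 1/((n:ℝ)+1) - 1/((n:ℝ)+1+y)
noncomputable def H (n : ℕ) (y : ℝ) : ℝ := 1/((n:ℝ)+1+y)^2

lemma hasDerivAt_F (n : ℕ) {y : ℝ} (hy : 0 < y) : HasDerivAt (F n) (G n y) y := by
  have hc : (0:ℝ) < (n:ℝ)+1 := by positivity
  have harg : (0:ℝ) < 1 + y/((n:ℝ)+1) := by positivity
  have h1 : HasDerivAt (fun z : ℝ => 1 + z/((n:ℝ)+1)) (1/((n:ℝ)+1)) y :=
    ((hasDerivAt_id y).div_const _).const_add 1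
  have h2 := h1.log harg.ne'
  have h3 := ((hasDerivAt_id y).div_const ((n:ℝ)+1)).sub h2
  refine h3.congr_deriv ?_
  unfold G
  have hcy : (0:ℝ) < (n:ℝ)+1+y := by positivity
  field_simp

lemma hasDerivAt_G (n : ℕ) {y : ℝ} (hy : 0 < y) : HasDerivAt (G n) (H n y) y := by
  have hcy : ((n:ℝ)+1+y) ≠ 0 := by positivity
  have h1 : HasDerivAt (fun z : ℝ => (n:ℝ)+1+z) 1 y := (hasDerivAt_id y).const_add _
  have h2 := h1.inv hcy
  have h3 := h2.const_sub (1/((n:ℝ)+1))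
  have h4 : HasDerivAt (fun z : ℝ => 1/((n:ℝ)+1) - ((n:ℝ)+1+z)⁻¹) (1/((n:ℝ)+1+y)^2) y := by
    refine h3.congr_deriv ?_
    field_simp
  refine h4.congr_of_eventuallyEq ?_
  filter_upwards with z
  unfold G
  rw [one_div, one_div]

lemma F_nonneg (n : ℕ) {y : ℝ} (hy : 0 ≤ y) : 0 ≤ F n y := by
  have hc : (0:ℝ) < (n:ℝ)+1 := by positivity
  have harg : (0:ℝ) < 1 + y/((n:ℝ)+1) := by positivity
  have := Real.log_le_sub_one_of_pos harg
  unfold F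
  linarith

lemma F_le (n : ℕ) {y : ℝ} (hy : 0 ≤ y) : F n y ≤ y^2 * (1/((n:ℝ)+1)^2) := by
  have hc : (0:ℝ) < (n:ℝ)+1 := by positivity
  set u := y/((n:ℝ)+1) with hu
  have hu0 : 0 ≤ u := by positivity
  have harg : (0:ℝ) < 1 + u := by positivity
  have hlog : 1 - (1+u)⁻¹ ≤ Real.log (1+u) := Real.one_sub_inv_le_log_of_pos harg
  have hkey : u - Real.log (1+u) ≤ u^2 := by
    have h1 : 1 - (1+u)⁻¹ = u/(1+u) := by field_simp; ring
    have h2 : u - u/(1+u) = u^2/(1+u) := by field_simp; ring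
    have h3 : u^2/(1+u) ≤ u^2 := by
      apply div_le_self (by positivity)
      linarith
    linarith
  unfold F
  have : u^2 = y^2 * (1/((n:ℝ)+1)^2) := by rw [hu]; field_simp
  linarith [hkey, this.ge]

lemma G_nonneg (n : ℕ) {y : ℝ} (hy : 0 ≤ y) : 0 ≤ G n y := by
  have hc : (0:ℝ) < (n:ℝ)+1 := by positivity
  have hcy : (0:ℝ) < (n:ℝ)+1+y := by positivity
  unfold G
  have : 1/((n:ℝ)+1+y) ≤ 1/((n:ℝ)+1) := one_div_le_one_div_of_le hc (by linarith)
  linarith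

lemma G_le (n : ℕ) {y : ℝ} (hy : 0 ≤ y) : G n y ≤ y * (1/((n:ℝ)+1)^2) := by
  have hc : (0:ℝ) < (n:ℝ)+1 := by positivity
  have hcy : (0:ℝ) < (n:ℝ)+1+y := by positivity
  have e : G n y = y / (((n:ℝ)+1) * ((n:ℝ)+1+y)) := by
    unfold G; field_simp; ring
  rw [e]
  rw [div_le_iff₀ (by positivity)]
  have : y * (1/((n:ℝ)+1)^2) * (((n:ℝ)+1) * ((n:ℝ)+1+y)) = y * (((n:ℝ)+1+y)/((n:ℝ)+1)) := by
    field_simp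
  rw [this]
  have h1 : (1:ℝ) ≤ ((n:ℝ)+1+y)/((n:ℝ)+1) := by
    rw [le_div_iff₀ hc]; linarith
  nlinarith

lemma H_nonneg (n : ℕ) (y : ℝ) : 0 ≤ H n y := by unfold H; positivity

lemma H_le (n : ℕ) {y : ℝ} (hy : 0 ≤ y) : H n y ≤ 1/((n:ℝ)+1)^2 := by
  have hc : (0:ℝ) < (n:ℝ)+1 := by positivity
  unfold H
  refine one_div_le_one_div_of_le (by positivity) ?_
  have : ((n:ℝ)+1) ≤ (n:ℝ)+1+y := by linarith
  exact pow_le_pow_left₀ hc.le this 2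

lemma summable_F {y : ℝ} (hy : 0 ≤ y) : Summable (fun n => F n y) :=
  Summable.of_nonneg_of_le (fun n => F_nonneg n hy) (fun n => F_le n hy)
    (summable_base.mul_left _)

lemma summable_G {y : ℝ} (hy : 0 ≤ y) : Summable (fun n => G n y) :=
  Summable.of_nonneg_of_le (fun n => G_nonneg n hy) (fun n => G_le n hy)
    (summable_base.mul_left _)

noncomputable def T (y : ℝ) : ℝ := ∑' n, F n y
noncomputable def U (y : ℝ) : ℝ := ∑' n, G n y
noncomputable def V (y : ℝ) : ℝ := ∑' n, H n y

lemma hasDerivAt_T {x : ℝ} (hx : 0 < x) : HasDerivAt T (U x) x := by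
  have hmem : x ∈ Set.Ioo (0:ℝ) (x+1) := ⟨hx, by linarith⟩
  exact hasDerivAt_tsum_of_isPreconnected
    (u := fun n : ℕ => (x+1) * (1/((n:ℝ)+1)^2)) (summable_base.mul_left _)
    isOpen_Ioo (convex_Ioo _ _).isPreconnected
    (fun n y hy => hasDerivAt_F n hy.1)
    (fun n y hy => by
      rw [Real.norm_eq_abs, abs_of_nonneg (G_nonneg n hy.1.le)]
      calc G n y ≤ y * (1/((n:ℝ)+1)^2) := G_le n hy.1.le
        _ ≤ (x+1) * (1/((n:ℝ)+1)^2) := by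
            have : (0:ℝ) ≤ 1/((n:ℝ)+1)^2 := by positivity
            nlinarith [hy.2])
    hmem (summable_F hx.le) hmem

lemma hasDerivAt_U {x : ℝ} (hx : 0 < x) : HasDerivAt U (V x) x := by
  have hmem : x ∈ Set.Ioo (0:ℝ) (x+1) := ⟨hx, by linarith⟩
  exact hasDerivAt_tsum_of_isPreconnected
    (u := fun n : ℕ => 1/((n:ℝ)+1)^2) summable_base
    isOpen_Ioo (convex_Ioo _ _).isPreconnected
    (fun n y hy => hasDerivAt_G n hy.1)
    (fun n y hy => by
      rw [Real.norm_eq_abs, abs_of_nonneg (H_nonneg n y)]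
      exact H_le n hy.1.le)
    hmem (summable_G hx.le) hmem

noncomputable def γ : ℝ := Real.eulerMascheroniConstant

noncomputable def Lfun (y : ℝ) : ℝ := -γ * y - Real.log y + T y

lemma log_factorial (n : ℕ) :
    Real.log (n.factorial : ℝ) = ∑ k ∈ Finset.range n, Real.log ((k:ℝ)+1) := by
  induction n with
  | zero => simp
  | succ n ih =>
    rw [Finset.sum_range_succ, ← ih, Nat.factorial_succ]
    push_cast
    rw [mul_comm, Real.log_mul (by positivity) (by positivity)]

lemma harmonic_cast (n : ℕ) : ((harmonic n : ℚ) : ℝ) = ∑ k ∈ Finset.range n, 1/((k:ℝ)+1) := by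
  unfold harmonic
  push_cast
  exact Finset.sum_congr rfl (fun k _ => by rw [one_div])

lemma logGammaSeq_eq {x : ℝ} (hx : 0 < x) (n : ℕ) :
    Real.BohrMollerup.logGammaSeq x n
      = (∑ k ∈ Finset.range n, F k x) - Real.log x - x * (((harmonic n : ℚ):ℝ) - Real.log n) := by
  rw [Real.BohrMollerup.logGammaSeq, log_factorial, harmonic_cast, Finset.sum_range_succ']
  have hF : ∀ k ∈ Finset.range n, F k x
      = x * (1/((k:ℝ)+1)) - (Real.log (x+((k:ℝ)+1)) - Real.log ((k:ℝ)+1)) := by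
    intro k _
    unfold F
    have hc : (0:ℝ) < (k:ℝ)+1 := by positivity
    rw [← Real.log_div (by positivity) hc.ne']
    have : (x+((k:ℝ)+1))/((k:ℝ)+1) = 1 + x/((k:ℝ)+1) := by field_simp; ring
    rw [this]
    ring
  rw [Finset.sum_congr rfl hF, Finset.sum_sub_distrib, ← Finset.mul_sum, Finset.sum_sub_distrib]
  have hcast : ∀ k ∈ Finset.range n, Real.log (x + ((k:ℕ)+1:ℕ)) = Real.log (x+((k:ℝ)+1)) := by
    intro k _; push_cast; ring_nf
  rw [Finset.sum_congr rfl hcast]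
  push_cast
  rw [add_zero]
  ring

lemma log_Gamma_eq {x : ℝ} (hx : 0 < x) : Real.log (Real.Gamma x) = Lfun x := by
  refine tendsto_nhds_unique (Real.BohrMollerup.tendsto_log_gamma hx) ?_
  have h1 : Tendsto (fun n : ℕ => ∑ k ∈ Finset.range n, F k x) atTop (𝓝 (T x)) :=
    (summable_F hx.le).hasSum.tendsto_sum_nat
  have h2 : Tendsto (fun n : ℕ => ((harmonic n : ℚ):ℝ) - Real.log n) atTop (𝓝 γ) :=
    Real.tendsto_harmonic_sub_log
  have hc : Tendsto (fun _ : ℕ => Real.log x) atTop (𝓝 (Real.log x)) := tendsto_const_nhds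
  have h3 := (h1.sub hc).sub (h2.const_mul x)
  have he : Lfun x = T x - Real.log x - x * γ := by unfold Lfun; ring
  rw [he]
  exact h3.congr (fun n => (logGammaSeq_eq hx n).symm)

noncomputable def ψ (y : ℝ) : ℝ := -γ - 1/y + U y

lemma hasDerivAt_Lfun {x : ℝ} (hx : 0 < x) : HasDerivAt Lfun (ψ x) x := by
  have h1 : HasDerivAt (fun y : ℝ => -γ * y) (-γ) x := by
    simpa using (hasDerivAt_id x).const_mul (-γ)
  have h2 := Real.hasDerivAt_log hx.ne'
  have h3 := (h1.sub h2).add (hasDerivAt_T hx)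
  refine h3.congr_deriv ?_
  unfold ψ
  rw [one_div]

lemma digamma_eq {x : ℝ} (hx : 0 < x) : digamma x = ψ x := by
  unfold digamma
  have hev : (fun y => Real.log (Real.Gamma y)) =ᶠ[nhds x] Lfun :=
    eventually_of_mem (isOpen_Ioi.mem_nhds hx) (fun y hy => log_Gamma_eq hy)
  rw [hev.deriv_eq, (hasDerivAt_Lfun hx).deriv]

lemma hasDerivAt_ψ {x : ℝ} (hx : 0 < x) : HasDerivAt ψ (1/x^2 + V x) x := by
  have h1 : HasDerivAt (fun y : ℝ => -γ - 1/y) (1/x^2) x := by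
    have h := (hasDerivAt_inv hx.ne').const_sub (-γ)
    have h' : HasDerivAt (fun y : ℝ => -γ - 1/y) (-(-(x^2)⁻¹)) x := by
      refine h.congr_of_eventuallyEq ?_
      filter_upwards with z
      rw [one_div]
    convert h' using 1
    rw [one_div, neg_neg]
  have h3 := h1.add (hasDerivAt_U hx)
  exact h3.congr_of_eventuallyEq (by filter_upwards with z; unfold ψ; rfl)

lemma trigamma_eq {x : ℝ} (hx : 0 < x) : trigamma x = 1/x^2 + V x := by
  unfold trigamma
  have hev : digamma =ᶠ[nhds x] ψ :=
    eventually_of_mem (isOpen_Ioi.mem_nhds hx) (fun y hy => digamma_eq hy)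
  rw [hev.deriv_eq, (hasDerivAt_ψ hx).deriv]

lemma summable_c {x : ℝ} (hx : 0 < x) : Summable (fun k : ℕ => 1/(x+1+k)^2) := by
  refine Summable.of_nonneg_of_le (fun k => by positivity) (fun k => ?_) summable_base
  have hk : ((k:ℝ)+1) ≤ x+1+k := by linarith [Nat.cast_nonneg (α := ℝ) k]
  have h1 : (0:ℝ) < (k:ℝ)+1 := by positivity
  refine one_div_le_one_div_of_le (by positivity) ?_
  exact pow_le_pow_left₀ h1.le hk 2

noncomputable def P (t : ℝ) : ℝ := 1/t - 1/(2*t^2) + 1/(6*t^3) - 1/(30*t^5)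
noncomputable def Q (t : ℝ) : ℝ := P t + 1/(36*t^7)

lemma key1 {t : ℝ} (ht : 0 < t) : P t - P (t+1) < 1/(t+1)^2 := by
  have h1 : (0:ℝ) < t + 1 := by linarith
  have e : 1/(t+1)^2 - (P t - P (t+1))
      = (30*t^6+90*t^5+96*t^4+42*t^3+6*t^2) / (180 * t^7 * (t+1)^7) := by
    unfold P; field_simp; ring
  nlinarith [div_pos (by positivity : (0:ℝ) < 30*t^6+90*t^5+96*t^4+42*t^3+6*t^2)
    (by positivity : (0:ℝ) < 180 * t^7 * (t+1)^7)]

lemma key2 {t : ℝ} (ht : 0 < t) : 1/(t+1)^2 < Q t - Q (t+1) := by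
  have h1 : (0:ℝ) < t + 1 := by linarith
  have e : (Q t - Q (t+1)) - 1/(t+1)^2
      = (5*t^6+15*t^5+79*t^4+133*t^3+99*t^2+35*t+5) / (180 * t^7 * (t+1)^7) := by
    unfold Q P; field_simp; ring
  nlinarith [div_pos (by positivity : (0:ℝ) < 5*t^6+15*t^5+79*t^4+133*t^3+99*t^2+35*t+5)
    (by positivity : (0:ℝ) < 180 * t^7 * (t+1)^7)]

lemma tendsto_P_atTop {x : ℝ} : Tendsto (fun n : ℕ => P (x + n)) atTop (𝓝 0) := by
  have hb : Tendsto (fun n : ℕ => x + (n:ℝ)) atTop atTop :=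
    tendsto_atTop_add_const_left _ _ tendsto_natCast_atTop_atTop
  have hj : ∀ j : ℕ, 0 < j → Tendsto (fun n : ℕ => 1/(x+(n:ℝ))^j) atTop (𝓝 0) := by
    intro j hj
    simpa [one_div, Function.comp_def, Pi.inv_def] using ((tendsto_pow_atTop (n := j) (by omega)).comp hb).inv_tendsto_atTop
  have := ((((hj 1 one_pos).sub ((hj 2 two_pos).const_mul (1/2))).add
      ((hj 3 (by norm_num)).const_mul (1/6))).sub ((hj 5 (by norm_num)).const_mul (1/30)))
  simp only [sub_zero, add_zero, mul_zero] at this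
  refine this.congr (fun n => ?_)
  unfold P
  field_simp

lemma tendsto_Q_atTop {x : ℝ} : Tendsto (fun n : ℕ => Q (x + n)) atTop (𝓝 0) := by
  have hb : Tendsto (fun n : ℕ => x + (n:ℝ)) atTop atTop :=
    tendsto_atTop_add_const_left _ _ tendsto_natCast_atTop_atTop
  have h7 : Tendsto (fun n : ℕ => (1/(36*(x+(n:ℝ))^7))) atTop (𝓝 0) := by
    have h := ((tendsto_pow_atTop (n := 7) (by norm_num)).comp hb).inv_tendsto_atTop.const_mul
      ((1:ℝ)/36)
    rw [mul_zero] at h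
    refine h.congr (fun n => ?_)
    show (1:ℝ)/36 * ((x+(n:ℝ))^7)⁻¹ = _
    rw [one_div, one_div, mul_inv]
  have h := (tendsto_P_atTop (x := x)).add h7
  rw [add_zero] at h
  exact h

lemma P_le_sum {x : ℝ} (hx : 0 < x) : P x ≤ ∑' k : ℕ, 1/(x+1+k)^2 := by
  have hpart : ∀ n : ℕ, P x - P (x+n) ≤ ∑ k ∈ Finset.range n, 1/(x+1+k)^2 := by
    intro n
    induction n with
    | zero => simp
    | succ n ih =>
      rw [Finset.sum_range_succ]
      have hxn : (0:ℝ) < x + n := by positivity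
      have := key1 hxn
      have e1 : x + ((n:ℕ)+1:ℕ) = (x + n) + 1 := by push_cast; ring
      have e2 : 1/(x+n+1)^2 = 1/(x+1+n)^2 := by ring_nf
      rw [e1]
      linarith
  have hA : Tendsto (fun n : ℕ => P x - P (x+n)) atTop (𝓝 (P x)) := by
    simpa using tendsto_const_nhds.sub (tendsto_P_atTop (x := x))
  exact le_of_tendsto_of_tendsto' hA (summable_c hx).hasSum.tendsto_sum_nat hpart

lemma sum_le_Q {x : ℝ} (hx : 0 < x) : ∑' k : ℕ, 1/(x+1+k)^2 ≤ Q x := by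
  have hpart : ∀ n : ℕ, ∑ k ∈ Finset.range n, 1/(x+1+k)^2 ≤ Q x - Q (x+n) := by
    intro n
    induction n with
    | zero => simp
    | succ n ih =>
      rw [Finset.sum_range_succ]
      have hxn : (0:ℝ) < x + n := by positivity
      have := key2 hxn
      have e1 : x + ((n:ℕ)+1:ℕ) = (x + n) + 1 := by push_cast; ring
      have e2 : 1/(x+n+1)^2 = 1/(x+1+n)^2 := by ring_nf
      rw [e1]
      linarith
  have hB : Tendsto (fun n : ℕ => Q x - Q (x+n)) atTop (𝓝 (Q x)) := by
    simpa using tendsto_const_nhds.sub (tendsto_Q_atTop (x := x))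
  exact le_of_tendsto_of_tendsto' (summable_c hx).hasSum.tendsto_sum_nat hB hpart

lemma tail_shift {x : ℝ} (hx : 0 < x) :
    ∑' k : ℕ, 1/(x+1+k)^2 = 1/(x+1)^2 + ∑' k : ℕ, 1/((x+1)+1+k)^2 := by
  rw [Summable.tsum_eq_zero_add (summable_c hx)]
  congr 1
  · norm_num
  · exact tsum_congr (fun k => by push_cast; ring_nf)

lemma P_lt_sum {x : ℝ} (hx : 0 < x) : P x < ∑' k : ℕ, 1/(x+1+k)^2 := by
  rw [tail_shift hx]
  have h1 := P_le_sum (by linarith : (0:ℝ) < x + 1)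
  have h2 := key1 hx
  linarith

lemma sum_lt_Q {x : ℝ} (hx : 0 < x) : ∑' k : ℕ, 1/(x+1+k)^2 < Q x := by
  rw [tail_shift hx]
  have h1 := sum_le_Q (by linarith : (0:ℝ) < x + 1)
  have h2 := key2 hx
  linarith


theorem main_ineq (x : ℝ) (hx : 0 < x) :
    1 / x ^ 2 - 1 / (x * (x + 1)) - 1 / (3 * x ^ 3) + 1 / (15 * x ^ 5) - 1 / (18 * x ^ 7)
      < 1 / x + 1 / (x + 1) - 2 * trigamma (x + 1) ∧
    1 / x + 1 / (x + 1) - 2 * trigamma (x + 1)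
      < 1 / x ^ 2 - 1 / (x * (x + 1)) - 1 / (3 * x ^ 3) + 1 / (15 * x ^ 5) := by
  have hx1 : (0:ℝ) < x + 1 := by linarith
  have htri : trigamma (x+1) = ∑' k : ℕ, 1/(x+1+k)^2 := by
    rw [trigamma_eq hx1, tail_shift hx]
    congr 1
    unfold V
    exact tsum_congr (fun n => by unfold H; ring_nf)
  have h1 : P x < ∑' k : ℕ, 1/(x+1+k)^2 := P_lt_sum hx
  have h2 : (∑' k : ℕ, 1/(x+1+k)^2) < Q x := sum_lt_Q hx
  have e2 : 1/x + 1/(x+1) - 2*P x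
      = 1 / x ^ 2 - 1 / (x * (x + 1)) - 1 / (3 * x ^ 3) + 1 / (15 * x ^ 5) := by
    unfold P
    field_simp
    ring
  have e1 : 1/x + 1/(x+1) - 2*Q x
      = 1 / x ^ 2 - 1 / (x * (x + 1)) - 1 / (3 * x ^ 3) + 1 / (15 * x ^ 5) - 1 / (18 * x ^ 7) := by
    unfold Q P
    field_simp
    ring
  rw [htri]
  constructor <;> linarith

end Stmt11Aux

theorem stmt11 (x : ℝ) (hx : 0 < x) :
    1 / x ^ 2 - 1 / (x * (x + 1)) - 1 / (3 * x ^ 3) + 1 / (15 * x ^ 5) - 1 / (18 * x ^ 7)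
      < 1 / x + 1 / (x + 1) - 2 * trigamma (x + 1) ∧
    1 / x + 1 / (x + 1) - 2 * trigamma (x + 1)
      < 1 / x ^ 2 - 1 / (x * (x + 1)) - 1 / (3 * x ^ 3) + 1 / (15 * x ^ 5) :=
  Stmt11Aux.main_ineq x hx
end

section
/- For every real x > 0, 1/(x+1/2) - 1/x + 1/(2x²) - 1/(6x³) + 1/(30x⁵) - 1/(42x⁷) < 1/(x+1/2) - ψ'(x+1) < 1/(x+1/2) - 1/x + 1/(2x²) - 1/(6x³) + 1/(30x⁵). -/
open Filter Topology Finset Set Real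

namespace Stmt12Aux

/-- Partial "digamma approximants": derivative of `logGammaSeq` in `x`. -/
noncomputable def F (n : ℕ) (x : ℝ) : ℝ :=
  Real.log n - ∑ m ∈ Finset.range (n + 1), (x + m)⁻¹

/-- Partial "trigamma approximants". -/
noncomputable def G (n : ℕ) (x : ℝ) : ℝ :=
  ∑ m ∈ Finset.range (n + 1), ((x + m) ^ 2)⁻¹

noncomputable def h (m : ℕ) (x : ℝ) : ℝ := ((m : ℝ) + 1)⁻¹ - (x + m + 1)⁻¹

noncomputable def g1 (x : ℝ) : ℝ :=
  -Real.eulerMascheroniConstant - x⁻¹ + ∑' m : ℕ, h m x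

noncomputable def g2 (x : ℝ) : ℝ := ∑' m : ℕ, ((x + m) ^ 2)⁻¹

lemma summable_shifted_sq : Summable (fun m : ℕ => (((m : ℝ) + 1) ^ 2)⁻¹) := by
  have := (Real.summable_one_div_nat_pow (p := 2)).mpr one_lt_two
  have h2 := (summable_nat_add_iff (f := fun n : ℕ => 1 / (n : ℝ) ^ 2) 1).mpr this
  refine h2.congr fun m => ?_
  push_cast
  rw [one_div]

lemma summable_sq {x : ℝ} (hx : 0 < x) : Summable (fun m : ℕ => ((x + m) ^ 2)⁻¹) := by
  rcases le_or_gt 1 x with hx1 | hx1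
  · refine Summable.of_nonneg_of_le (fun m => by positivity) (fun m => ?_) summable_shifted_sq
    apply inv_anti₀ (by positivity)
    nlinarith [Nat.cast_nonneg (α := ℝ) m]
  · refine Summable.of_nonneg_of_le (fun m => by positivity)
      (fun m => ?_) (summable_shifted_sq.mul_left ((x ^ 2)⁻¹))
    rw [← mul_inv, ← mul_pow]
    apply inv_anti₀ (by positivity)
    have hab : x * ((m : ℝ) + 1) ≤ x + m := by
      nlinarith [mul_le_of_le_one_left (Nat.cast_nonneg (α := ℝ) m) hx1.le]
    exact pow_le_pow_left₀ (by positivity) hab 2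

lemma h_nonneg {m : ℕ} {x : ℝ} (hx : 0 ≤ x) : 0 ≤ h m x := by
  have h0 : (0:ℝ) < (m : ℝ) + 1 := by positivity
  have h1 : (0:ℝ) < x + m + 1 := by linarith
  unfold h
  rw [sub_nonneg]
  apply inv_anti₀ h0
  linarith

lemma h_le {m : ℕ} {x b : ℝ} (hx : 0 ≤ x) (hxb : x ≤ b) :
    h m x ≤ b * ((((m : ℝ) + 1) ^ 2)⁻¹) := by
  have h0 : (0:ℝ) < (m : ℝ) + 1 := by positivity
  have h1 : (0:ℝ) < x + m + 1 := by linarith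
  have key : h m x = x / (((m : ℝ) + 1) * (x + m + 1)) := by
    unfold h; field_simp; ring
  rw [key, ← div_eq_mul_inv]
  apply div_le_div₀ (le_trans hx hxb) hxb (by positivity)
  nlinarith

lemma summable_h {x : ℝ} (hx : 0 < x) : Summable (fun m : ℕ => h m x) :=
  Summable.of_nonneg_of_le (fun m => h_nonneg hx.le) (fun m => h_le hx.le le_rfl)
    (summable_shifted_sq.mul_left x)
lemma tuo_shift {F : ℕ → ℝ → ℝ} {f : ℝ → ℝ} {s : Set ℝ}
    (hF : TendstoUniformlyOn F f atTop s) :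
    TendstoUniformlyOn (fun n => F (n + 1)) f atTop s :=
  fun u hu => (tendsto_add_atTop_nat 1).eventually (hF u hu)

lemma to_tlu {F : ℕ → ℝ → ℝ} {f : ℝ → ℝ}
    (hF : ∀ a b : ℝ, 0 < a → TendstoUniformlyOn F f atTop (Set.Icc a b)) :
    TendstoLocallyUniformlyOn F f atTop (Set.Ioi 0) := by
  rw [tendstoLocallyUniformlyOn_iff_forall_isCompact isOpen_Ioi]
  intro K hKs hK
  rcases K.eq_empty_or_nonempty with rfl | hne
  · simp [TendstoUniformlyOn]
  · have ha : sInf K ∈ K := hK.sInf_mem hne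
    have hb : sSup K ∈ K := hK.sSup_mem hne
    have hsub : K ⊆ Set.Icc (sInf K) (sSup K) := fun y hy =>
      ⟨csInf_le hK.bddBelow hy, le_csSup hK.bddAbove hy⟩
    exact (hF _ _ (hKs ha)).mono hsub

lemma tuo_G (a b : ℝ) (ha : 0 < a) :
    TendstoUniformlyOn (fun (n : ℕ) (x : ℝ) => ∑ m ∈ Finset.range n, ((x + (m : ℝ)) ^ 2)⁻¹)
      (fun (x : ℝ) => ∑' m : ℕ, ((x + (m : ℝ)) ^ 2)⁻¹) atTop (Set.Icc a b) := by
  apply tendstoUniformlyOn_tsum_nat (u := fun m => ((a + m) ^ 2)⁻¹) (summable_sq ha)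
  intro n x hx
  have h1 : (0:ℝ) < a + n := by positivity
  have h2 : (0:ℝ) < x + n := by linarith [hx.1]
  rw [Real.norm_eq_abs, abs_of_nonneg (by positivity)]
  apply inv_anti₀ (by positivity)
  have : a + (n:ℝ) ≤ x + n := by linarith [hx.1]
  exact pow_le_pow_left₀ h1.le this 2

lemma tlu_G : TendstoLocallyUniformlyOn G g2 atTop (Set.Ioi 0) := by
  apply to_tlu
  intro a b ha
  exact tuo_shift (tuo_G a b ha)
lemma F_decomp (n : ℕ) (x : ℝ) :
    F n x = (Real.log n - ∑ m ∈ Finset.range n, ((m : ℝ) + 1)⁻¹)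
      + (-x⁻¹ + ∑ m ∈ Finset.range n, h m x) := by
  unfold F h
  rw [Finset.sum_range_succ' (fun m => (x + (m : ℝ))⁻¹) n, Finset.sum_sub_distrib]
  simp only [Nat.cast_add, Nat.cast_one, Nat.cast_zero, ← add_assoc, add_zero]
  ring

lemma tendsto_log_sub_harmonic :
    Tendsto (fun n : ℕ => Real.log n - ∑ m ∈ Finset.range n, ((m : ℝ) + 1)⁻¹) atTop
      (𝓝 (-Real.eulerMascheroniConstant)) := by
  have h1 := Real.tendsto_harmonic_sub_log
  have h2 : Tendsto (fun n : ℕ => -((harmonic n : ℝ) - Real.log n)) atTop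
      (𝓝 (-Real.eulerMascheroniConstant)) := h1.neg
  refine h2.congr fun n => ?_
  rw [neg_sub]
  congr 1
  rw [harmonic]
  push_cast
  ring

lemma tuo_F (a b : ℝ) (ha : 0 < a) :
    TendstoUniformlyOn F g1 atTop (Set.Icc a b) := by
  have h1 : TendstoUniformlyOn
      (fun (n : ℕ) (_ : ℝ) => Real.log n - ∑ m ∈ Finset.range n, ((m : ℝ) + 1)⁻¹)
      (fun _ => -Real.eulerMascheroniConstant) atTop (Set.Icc a b) :=
    tendsto_log_sub_harmonic.tendstoUniformlyOn_const _
  have h2 : TendstoUniformlyOn (fun (_ : ℕ) (x : ℝ) => -x⁻¹)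
      (fun x : ℝ => -x⁻¹) atTop (Set.Icc a b) := by
    rw [Metric.tendstoUniformlyOn_iff]
    intro ε hε
    filter_upwards with n x _
    simpa using hε
  have h3 : TendstoUniformlyOn (fun (n : ℕ) (x : ℝ) => ∑ m ∈ Finset.range n, h m x)
      (fun x : ℝ => ∑' m : ℕ, h m x) atTop (Set.Icc a b) := by
    apply tendstoUniformlyOn_tsum_nat (u := fun m => b * ((((m : ℝ) + 1) ^ 2)⁻¹))
      (summable_shifted_sq.mul_left b)
    intro m x hx
    have hx0 : 0 < x := lt_of_lt_of_le ha hx.1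
    rw [Real.norm_eq_abs, abs_of_nonneg (h_nonneg hx0.le)]
    exact h_le hx0.le hx.2
  have := h1.add (h2.add h3)
  refine this.congr_right (fun x _ => by unfold g1; simp [Pi.add_apply]; ring) |>.congr ?_
  filter_upwards with n
  intro x _
  simp only [Pi.add_apply]
  rw [F_decomp]
lemma tlu_F : TendstoLocallyUniformlyOn F g1 atTop (Set.Ioi 0) :=
  to_tlu tuo_F

lemma hasDerivAt_logGammaSeq (n : ℕ) {y : ℝ} (hy : 0 < y) :
    HasDerivAt (fun z => Real.BohrMollerup.logGammaSeq z n) (F n y) y := by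
  have hsum : HasDerivAt (fun z : ℝ => ∑ m ∈ Finset.range (n + 1), Real.log (z + m))
      (∑ m ∈ Finset.range (n + 1), (y + m)⁻¹) y := by
    apply HasDerivAt.fun_sum
    intro m _
    have hym : 0 < y + m := by positivity
    have := (Real.hasDerivAt_log hym.ne').comp y ((hasDerivAt_id y).add_const (m : ℝ))
    simpa [one_div, Function.comp_def] using this
  have hlin : HasDerivAt (fun z : ℝ => z * Real.log n + Real.log (Nat.factorial n))
      (Real.log n) y := by
    simpa using (hasDerivAt_mul_const (Real.log (n : ℝ))).add_const (Real.log (Nat.factorial n))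
  have := hlin.sub hsum
  unfold Real.BohrMollerup.logGammaSeq F
  exact this

lemma digamma_hasDeriv {x : ℝ} (hx : 0 < x) :
    HasDerivAt (fun y => Real.log (Real.Gamma y)) (g1 x) x := by
  apply hasDerivAt_of_tendstoLocallyUniformlyOn isOpen_Ioi tlu_F
    (Filter.Eventually.of_forall fun n y hy => hasDerivAt_logGammaSeq n hy)
    (fun y hy => Real.BohrMollerup.tendsto_log_gamma hy) (Set.mem_Ioi.mpr hx)

lemma digamma_eq {x : ℝ} (hx : 0 < x) : digamma x = g1 x :=
  (digamma_hasDeriv hx).deriv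

lemma hasDerivAt_F (n : ℕ) {y : ℝ} (hy : 0 < y) :
    HasDerivAt (F n) (G n y) y := by
  have hsum : HasDerivAt (fun z : ℝ => ∑ m ∈ Finset.range (n + 1), (z + m)⁻¹)
      (∑ m ∈ Finset.range (n + 1), -((y + m) ^ 2)⁻¹) y := by
    apply HasDerivAt.fun_sum
    intro m _
    have hym : 0 < y + m := by positivity
    have := ((hasDerivAt_id y).add_const (m : ℝ)).inv hym.ne'
    simpa [div_eq_mul_inv, Pi.inv_def] using this
  have := (hasDerivAt_const y (Real.log n)).sub hsum
  unfold F G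
  refine this.congr_deriv ?_
  rw [Finset.sum_neg_distrib]
  ring

lemma trigamma_eq {x : ℝ} (hx : 0 < x) : trigamma x = g2 x := by
  have hd : HasDerivAt digamma (g2 x) x := by
    apply hasDerivAt_of_tendstoLocallyUniformlyOn isOpen_Ioi tlu_G
      (Filter.Eventually.of_forall fun n y hy => hasDerivAt_F n hy)
      (fun y hy => ?_) (Set.mem_Ioi.mpr hx)
    rw [digamma_eq hy]
    exact tlu_F.tendsto_at hy
  exact hd.deriv
noncomputable def Lf (x : ℝ) : ℝ := x⁻¹ - (2 * x ^ 2)⁻¹ + (6 * x ^ 3)⁻¹ - (30 * x ^ 5)⁻¹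

noncomputable def Uf (x : ℝ) : ℝ := Lf x + (42 * x ^ 7)⁻¹

lemma keyU {x : ℝ} (hx : 0 < x) : ((x + 1) ^ 2)⁻¹ < Uf x - Uf (x + 1) := by
  have h1 : (0:ℝ) < x + 1 := by linarith
  have e : Uf x - Uf (x + 1) - ((x + 1) ^ 2)⁻¹ =
      (13230 * x ^ 6 + 52920 * x ^ 5 + 86730 * x ^ 4 + 74970 * x ^ 3 + 36330 * x ^ 2
        + 9450 * x + 1050) / (44100 * x ^ 7 * (x + 1) ^ 9) := by
    unfold Uf Lf
    field_simp
    ring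
  have hpos : (0:ℝ) < (13230 * x ^ 6 + 52920 * x ^ 5 + 86730 * x ^ 4 + 74970 * x ^ 3
      + 36330 * x ^ 2 + 9450 * x + 1050) / (44100 * x ^ 7 * (x + 1) ^ 9) := by positivity
  linarith

lemma keyL {x : ℝ} (hx : 0 < x) : Lf x - Lf (x + 1) < ((x + 1) ^ 2)⁻¹ := by
  have h1 : (0:ℝ) < x + 1 := by linarith
  have e : ((x + 1) ^ 2)⁻¹ - (Lf x - Lf (x + 1)) =
      (150 * x ^ 4 + 450 * x ^ 3 + 480 * x ^ 2 + 210 * x + 30)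
        / (900 * x ^ 5 * (x + 1) ^ 7) := by
    unfold Lf
    field_simp
    ring
  have hpos : (0:ℝ) < (150 * x ^ 4 + 450 * x ^ 3 + 480 * x ^ 2 + 210 * x + 30)
      / (900 * x ^ 5 * (x + 1) ^ 7) := by positivity
  linarith

lemma tendsto_xn (x : ℝ) : Tendsto (fun n : ℕ => x + n) atTop atTop :=
  tendsto_atTop_add_const_left _ x tendsto_natCast_atTop_atTop

lemma tendsto_inv_pow_zero (x : ℝ) (c : ℝ) (k : ℕ) (hk : 0 < k) (hc : 0 < c) :
    Tendsto (fun n : ℕ => (c * (x + n) ^ k)⁻¹) atTop (𝓝 0) := by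
  apply Tendsto.comp tendsto_inv_atTop_zero
  exact Tendsto.const_mul_atTop hc ((tendsto_pow_atTop hk.ne').comp (tendsto_xn x))

lemma tendsto_Lf (x : ℝ) : Tendsto (fun n : ℕ => Lf (x + n)) atTop (𝓝 0) := by
  have h1 : Tendsto (fun n : ℕ => (1 * (x + n) ^ 1)⁻¹) atTop (𝓝 0) :=
    tendsto_inv_pow_zero x 1 1 one_pos one_pos
  have h2 := tendsto_inv_pow_zero x 2 2 two_pos two_pos
  have h3 := tendsto_inv_pow_zero x 6 3 (by norm_num) (by norm_num)
  have h5 := tendsto_inv_pow_zero x 30 5 (by norm_num) (by norm_num)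
  have := ((h1.sub h2).add h3).sub h5
  simpa [Lf] using this

lemma tendsto_Uf (x : ℝ) : Tendsto (fun n : ℕ => Uf (x + n)) atTop (𝓝 0) := by
  have h7 := tendsto_inv_pow_zero x 42 7 (by norm_num) (by norm_num)
  have := (tendsto_Lf x).add h7
  simpa [Uf] using this

lemma partial_le_U {x : ℝ} (hx : 0 < x) (n : ℕ) :
    ∑ m ∈ Finset.range n, (((x + 1) + (m : ℝ)) ^ 2)⁻¹ ≤ Uf x - Uf (x + n) := by
  induction n with
  | zero => simp
  | succ n ih =>
    rw [Finset.sum_range_succ]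
    have hxn : 0 < x + n := by positivity
    have hk := keyU hxn
    have e1 : ((x + 1) + (n : ℝ)) = (x + n) + 1 := by ring
    have e2 : x + ((n : ℝ) + 1) = (x + n) + 1 := by ring
    push_cast
    rw [e1, e2]
    linarith

lemma partial_ge_L {x : ℝ} (hx : 0 < x) (n : ℕ) :
    Lf x - Lf (x + n) ≤ ∑ m ∈ Finset.range n, (((x + 1) + (m : ℝ)) ^ 2)⁻¹ := by
  induction n with
  | zero => simp
  | succ n ih =>
    rw [Finset.sum_range_succ]
    have hxn : 0 < x + n := by positivity
    have hk := keyL hxn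
    have e1 : ((x + 1) + (n : ℝ)) = (x + n) + 1 := by ring
    have e2 : x + ((n : ℝ) + 1) = (x + n) + 1 := by ring
    push_cast
    rw [e1, e2]
    linarith

lemma g2_weak_upper {x : ℝ} (hx : 0 < x) : g2 (x + 1) ≤ Uf x := by
  have hx1 : (0:ℝ) < x + 1 := by linarith
  have hts : Tendsto (fun n => ∑ m ∈ Finset.range n, (((x + 1) + (m : ℝ)) ^ 2)⁻¹) atTop
      (𝓝 (g2 (x + 1))) := (summable_sq hx1).hasSum.tendsto_sum_nat
  have hU : Tendsto (fun n : ℕ => Uf x - Uf (x + n)) atTop (𝓝 (Uf x - 0)) :=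
    tendsto_const_nhds.sub (tendsto_Uf x)
  have := le_of_tendsto_of_tendsto' hts hU (partial_le_U hx)
  simpa using this

lemma g2_weak_lower {x : ℝ} (hx : 0 < x) : Lf x ≤ g2 (x + 1) := by
  have hx1 : (0:ℝ) < x + 1 := by linarith
  have hbd : ∀ n : ℕ, Lf x - Lf (x + n) ≤ g2 (x + 1) := fun n =>
    le_trans (partial_ge_L hx n) (Summable.sum_le_tsum _ (fun m _ => by positivity) (summable_sq hx1))
  have hL : Tendsto (fun n : ℕ => Lf x - Lf (x + n)) atTop (𝓝 (Lf x - 0)) :=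
    tendsto_const_nhds.sub (tendsto_Lf x)
  have := le_of_tendsto' hL hbd
  simpa using this

lemma g2_succ {x : ℝ} (hx : 0 < x) : g2 x = (x ^ 2)⁻¹ + g2 (x + 1) := by
  unfold g2
  rw [Summable.tsum_eq_zero_add (summable_sq hx)]
  congr 1
  · norm_num
  · apply tsum_congr
    intro m
    push_cast
    ring_nf

lemma g2_upper {x : ℝ} (hx : 0 < x) : g2 (x + 1) < Uf x := by
  have hx1 : (0:ℝ) < x + 1 := by linarith
  have hs := g2_succ hx1
  have hw := g2_weak_upper hx1
  have hk := keyU hx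
  have e : x + 1 + 1 = x + 2 := by ring
  rw [e] at hs hw
  linarith [hs, hw, hk]

lemma g2_lower {x : ℝ} (hx : 0 < x) : Lf x < g2 (x + 1) := by
  have hx1 : (0:ℝ) < x + 1 := by linarith
  have hs := g2_succ hx1
  have hw := g2_weak_lower hx1
  have hk := keyL hx
  linarith [hs, hw, hk]

end Stmt12Aux

theorem stmt12 (x : ℝ) (hx : 0 < x) :
    1 / (x + 1 / 2) - 1 / x + 1 / (2 * x ^ 2) - 1 / (6 * x ^ 3) + 1 / (30 * x ^ 5)
        - 1 / (42 * x ^ 7)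
      < 1 / (x + 1 / 2) - trigamma (x + 1) ∧
    1 / (x + 1 / 2) - trigamma (x + 1)
      < 1 / (x + 1 / 2) - 1 / x + 1 / (2 * x ^ 2) - 1 / (6 * x ^ 3) + 1 / (30 * x ^ 5) := by
  have h1 : (0:ℝ) < x + 1 := by linarith
  have ht : trigamma (x + 1) = Stmt12Aux.g2 (x + 1) := Stmt12Aux.trigamma_eq h1
  have hU := Stmt12Aux.g2_upper hx
  have hL := Stmt12Aux.g2_lower hx
  unfold Stmt12Aux.Uf Stmt12Aux.Lf at hU hL
  rw [ht]
  simp only [one_div]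
  constructor <;> linarith
end
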